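/- arXiv:1203.4900 — 5 statements merged into one kernel-verified Lean document; each statement's English description precedes it below -/
import Mathlib

section
/- Let G = (V, E) be an undirected graph on n vertices and let k ≥ 1. Then the number of k-weak edges of G is at most k(n − 1). -/
open Finset

variable {V : Type} [Fintype V] [DecidableEq V]

/-- The value of the cut determined by `T` in the subgraph of `G` induced by the
vertex set `U`: the number of edges of `G` with one endpoint in `T` and the
other in `U \ T`. -/
def cutValOn (G : SimpleGraph V) [DecidableRel G.Adj] (U T : Finset V) : ℕ :=
  ∑ u ∈ T, ∑ v ∈ U \ T, if G.Adj u v then 1 else 0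

/-- The vertex-induced subgraph of `G` on `U` is `k`-connected: every cut of it
has value at least `k`. -/
def KConnOn (G : SimpleGraph V) [DecidableRel G.Adj] (k : ℕ) (U : Finset V) : Prop :=
  ∀ T : Finset V, T ⊆ U → T.Nonempty → T ≠ U → k ≤ cutValOn G U T

/-- The strong connectivity of an edge `e`: the largest `k` such that some
`k`-connected vertex-induced subgraph of `G` contains (both endpoints of) `e`. -/
noncomputable def strongConn (G : SimpleGraph V) [DecidableRel G.Adj] (e : Sym2 V) : ℕ :=
  sSup {k | ∃ U : Finset V, (∀ x ∈ e, x ∈ U) ∧ KConnOn G k U}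

omit [Fintype V] in
lemma cutValOn_eq_card (G : SimpleGraph V) [DecidableRel G.Adj] (U T : Finset V) :
    cutValOn G U T = ((T ×ˢ (U \ T)).filter fun p => G.Adj p.1 p.2).card := by
  rw [Finset.card_filter, Finset.sum_product]
  rfl

open scoped Classical in
lemma key (G : SimpleGraph V) [DecidableRel G.Adj] (k : ℕ) (U : Finset V) :
    (G.edgeFinset.filter (fun e => (∀ x ∈ e, x ∈ U) ∧
       ∀ W : Finset V, W ⊆ U → (∀ x ∈ e, x ∈ W) → ¬ KConnOn G k W)).card
      ≤ k * (U.card - 1) := by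
  induction U using Finset.strongInduction with
  | _ U IH =>
  by_cases hU : KConnOn G k U
  · have : G.edgeFinset.filter (fun e => (∀ x ∈ e, x ∈ U) ∧
       ∀ W : Finset V, W ⊆ U → (∀ x ∈ e, x ∈ W) → ¬ KConnOn G k W) = ∅ := by
      rw [Finset.eq_empty_iff_forall_notMem]
      intro e he
      rw [Finset.mem_filter] at he
      exact he.2.2 U subset_rfl he.2.1 hU
    rw [this]
    simp
  · unfold KConnOn at hU
    push_neg at hU
    obtain ⟨T, hTU, hTne, hTneq, hcut⟩ := hU
    have hsub : G.edgeFinset.filter (fun e => (∀ x ∈ e, x ∈ U) ∧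
          ∀ W : Finset V, W ⊆ U → (∀ x ∈ e, x ∈ W) → ¬ KConnOn G k W) ⊆
        (G.edgeFinset.filter (fun e => (∀ x ∈ e, x ∈ T) ∧
          ∀ W : Finset V, W ⊆ T → (∀ x ∈ e, x ∈ W) → ¬ KConnOn G k W) ∪
        G.edgeFinset.filter (fun e => (∀ x ∈ e, x ∈ U \ T) ∧
          ∀ W : Finset V, W ⊆ U \ T → (∀ x ∈ e, x ∈ W) → ¬ KConnOn G k W)) ∪
        G.edgeFinset.filter (fun e => ∃ a ∈ T, ∃ b ∈ U \ T, e = s(a, b)) := by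
      intro e he
      revert he
      induction e using Sym2.inductionOn with
      | hf a b =>
        intro he
        simp only [Finset.mem_filter, Finset.mem_union] at he ⊢
        obtain ⟨heE, hend, hP⟩ := he
        have haU : a ∈ U := hend a (Sym2.mem_mk_left a b)
        have hbU : b ∈ U := hend b (Sym2.mem_mk_right a b)
        by_cases haT : a ∈ T <;> by_cases hbT : b ∈ T
        · refine Or.inl (Or.inl ⟨heE, ?_, ?_⟩)
          · intro x hx
            rcases Sym2.mem_iff.mp hx with rfl | rfl <;> assumption
          · exact fun W hWT => hP W (hWT.trans hTU)
        · exact Or.inr ⟨heE, a, haT, b, Finset.mem_sdiff.mpr ⟨hbU, hbT⟩, rfl⟩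
        · refine Or.inr ⟨heE, b, hbT, a, Finset.mem_sdiff.mpr ⟨haU, haT⟩, ?_⟩
          exact Sym2.eq_swap
        · refine Or.inl (Or.inr ⟨heE, ?_, ?_⟩)
          · intro x hx
            rcases Sym2.mem_iff.mp hx with rfl | rfl <;>
              exact Finset.mem_sdiff.mpr ⟨by assumption, by assumption⟩
          · exact fun W hWT => hP W (hWT.trans (Finset.sdiff_subset))
    have hX : (G.edgeFinset.filter (fun e => ∃ a ∈ T, ∃ b ∈ U \ T, e = s(a, b))).card
        ≤ cutValOn G U T := by
      rw [cutValOn_eq_card]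
      calc (G.edgeFinset.filter (fun e => ∃ a ∈ T, ∃ b ∈ U \ T, e = s(a, b))).card
          ≤ (((T ×ˢ (U \ T)).filter fun p => G.Adj p.1 p.2).image
              fun p => s(p.1, p.2)).card := by
            apply Finset.card_le_card
            intro e he
            simp only [Finset.mem_filter] at he
            obtain ⟨heE, a, haT, b, hb, rfl⟩ := he
            have hadj : G.Adj a b := by
              rw [SimpleGraph.mem_edgeFinset, SimpleGraph.mem_edgeSet] at heE
              exact heE
            exact Finset.mem_image.mpr ⟨(a, b),
              Finset.mem_filter.mpr ⟨Finset.mem_product.mpr ⟨haT, hb⟩, hadj⟩, rfl⟩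
        _ ≤ _ := Finset.card_image_le
    have hssT : T ⊂ U := Finset.ssubset_iff_subset_ne.mpr ⟨hTU, hTneq⟩
    have hssT' : U \ T ⊂ U := Finset.sdiff_ssubset hTU hTne
    have hA := IH T hssT
    have hB := IH (U \ T) hssT'
    have hcard := Finset.card_le_card hsub
    have hcard2 := (hcard.trans (Finset.card_union_le _ _)).trans
      (Nat.add_le_add_right (Finset.card_union_le _ _) _)
    obtain ⟨t', ht'⟩ : ∃ t', T.card = t' + 1 :=
      ⟨T.card - 1, by have := hTne.card_pos; omega⟩
    obtain ⟨s', hs'⟩ : ∃ s', (U \ T).card = s' + 1 := by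
      obtain ⟨x, hxU, hxT⟩ := Finset.exists_of_ssubset hssT
      have : (U \ T).Nonempty := ⟨x, Finset.mem_sdiff.mpr ⟨hxU, hxT⟩⟩
      exact ⟨(U \ T).card - 1, by have := this.card_pos; omega⟩
    have hUcard : U.card = t' + s' + 2 := by
      have := Finset.card_sdiff_add_card_eq_card hTU
      omega
    have e3 : k * (U.card - 1) = k * t' + k * s' + k := by
      rw [hUcard]
      have : t' + s' + 2 - 1 = t' + s' + 1 := rfl
      rw [this]; ring
    rw [e3]
    rw [ht'] at hA
    rw [hs'] at hB
    simp only [Nat.add_sub_cancel] at hA hB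
    have hXk : (G.edgeFinset.filter (fun e => ∃ a ∈ T, ∃ b ∈ U \ T, e = s(a, b))).card < k :=
      lt_of_le_of_lt hX hcut
    calc (G.edgeFinset.filter (fun e => (∀ x ∈ e, x ∈ U) ∧
          ∀ W : Finset V, W ⊆ U → (∀ x ∈ e, x ∈ W) → ¬ KConnOn G k W)).card
        ≤ _ + _ + _ := hcard2
      _ ≤ k * t' + k * s' + k := by
          have := Nat.add_le_add (Nat.add_le_add hA hB) hXk.le
          omega

open scoped Classical in
/-- The number of `k`-weak edges (edges of strong connectivity `< k`) of a graph
on `n` vertices is at most `k * (n - 1)`. -/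
theorem stmt0 (V : Type) [Fintype V] [DecidableEq V] (G : SimpleGraph V)
    [DecidableRel G.Adj] (k : ℕ) (hk : 1 ≤ k) :
    (G.edgeFinset.filter (fun e => strongConn G e < k)).card ≤ k * (Fintype.card V - 1) := by
  have hsub : G.edgeFinset.filter (fun e => strongConn G e < k) ⊆
      G.edgeFinset.filter (fun e => (∀ x ∈ e, x ∈ (Finset.univ : Finset V)) ∧
        ∀ W : Finset V, W ⊆ Finset.univ → (∀ x ∈ e, x ∈ W) → ¬ KConnOn G k W) := by
    intro e he
    revert he
    induction e using Sym2.inductionOn with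
    | hf a b =>
      intro he
      simp only [Finset.mem_filter] at he ⊢
      obtain ⟨heE, hlt⟩ := he
      have hadj : G.Adj a b := by
        rw [SimpleGraph.mem_edgeFinset, SimpleGraph.mem_edgeSet] at heE
        exact heE
      refine ⟨heE, fun x _ => Finset.mem_univ x, ?_⟩
      intro W _ hWe hK
      have hmem : k ∈ {k' | ∃ U : Finset V, (∀ x ∈ s(a, b), x ∈ U) ∧ KConnOn G k' U} :=
        ⟨W, hWe, hK⟩
      have hbdd : BddAbove {k' | ∃ U : Finset V, (∀ x ∈ s(a, b), x ∈ U) ∧ KConnOn G k' U} := by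
        refine ⟨Fintype.card V, fun k' hk' => ?_⟩
        obtain ⟨U', hU'e, hU'⟩ := hk'
        have haU' : a ∈ U' := hU'e a (Sym2.mem_mk_left a b)
        have hbU' : b ∈ U' := hU'e b (Sym2.mem_mk_right a b)
        have hne : ({a} : Finset V) ≠ U' := by
          intro h
          rw [← h] at hbU'
          exact hadj.ne (Finset.mem_singleton.mp hbU').symm
        have h1 : k' ≤ cutValOn G U' {a} :=
          hU' {a} (Finset.singleton_subset_iff.mpr haU') ⟨a, Finset.mem_singleton_self a⟩ hne
        have h2 : cutValOn G U' {a} ≤ Fintype.card V := by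
          rw [cutValOn_eq_card]
          calc (Finset.filter (fun p => G.Adj p.1 p.2) (({a} : Finset V) ×ˢ (U' \ {a}))).card
              ≤ (({a} : Finset V) ×ˢ (U' \ {a})).card := Finset.card_filter_le _ _
            _ = (U' \ {a}).card := by rw [Finset.card_product, Finset.card_singleton, one_mul]
            _ ≤ Fintype.card V := (Finset.card_le_univ _).trans_eq Finset.card_univ
        exact h1.trans h2
      have : k ≤ strongConn G s(a, b) := le_csSup hbdd hmem
      omega
  calc (G.edgeFinset.filter (fun e => strongConn G e < k)).card
      ≤ _ := Finset.card_le_card hsub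
    _ ≤ k * ((Finset.univ : Finset V).card - 1) := key G k Finset.univ
    _ = k * (Fintype.card V - 1) := by rw [Finset.card_univ]
end

section
/- For every d ≥ 1 there exists a constant c = c(d) > 0 with the following property. Let G = (V, E) be a k-connected unweighted graph on n ≥ 2 vertices, let ε ∈ (0, 1), and set p = min(1, c · log n / (ε² k)). Let G' be the random weighted graph obtained by including each edge of G independently with probability p, giving each included edge weight 1/p. Then G' is an ε-sparsification of G with probability at least 1 − n^{−d}. -/
open Finset MeasureTheory ProbabilityTheory

variable {V : Type} [Fintype V] [DecidableEq V]

/-- The value of the cut determined by `S` for an edge-weight function `w`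
(summing `w u v` over ordered pairs with `u ∈ S`, `v ∉ S`, so that each
unordered cross pair is counted once). -/
def cutVal (w : V → V → ℝ) (S : Finset V) : ℝ := ∑ u ∈ S, ∑ v ∈ Sᶜ, w u v

/-- The value of the cut determined by `S` in an unweighted graph `G`. -/
def cutValN (G : SimpleGraph V) [DecidableRel G.Adj] (S : Finset V) : ℕ :=
  ∑ u ∈ S, ∑ v ∈ Sᶜ, if G.Adj u v then 1 else 0

/-- The weight function of an unweighted graph. -/
def gWeight (G : SimpleGraph V) [DecidableRel G.Adj] : V → V → ℝ :=
  fun u v => if G.Adj u v then 1 else 0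

/-- `w'` is an `ε`-sparsification of `w`: every cut value of `w'` is within a
factor `(1 ± ε)` of the corresponding cut value of `w`. -/
def IsSparsification (ε : ℝ) (w w' : V → V → ℝ) : Prop :=
  ∀ S : Finset V, S.Nonempty → S ≠ Finset.univ →
    (1 - ε) * cutVal w S ≤ cutVal w' S ∧ cutVal w' S ≤ (1 + ε) * cutVal w S

open Finset

namespace Stmt2Aux
variable {W : Type} [DecidableEq W]

def cutA (w : W → W → ℕ) (A S : Finset W) : ℕ := ∑ u ∈ S, ∑ v ∈ A \ S, w u v

def smallCuts (w : W → W → ℕ) (A : Finset W) (b k : ℕ) : Finset (Finset W) :=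
  A.powerset.filter (fun S => S.Nonempty ∧ S ≠ A ∧ 2 * cutA w A S ≤ b * k)

def contractW (w : W → W → ℕ) (x y : W) : W → W → ℕ :=
  fun u v => if u = v ∨ u = y ∨ v = y then 0
    else w u v + (if u = x then w y v else 0) + (if v = x then w u y else 0)

lemma contract_cut {w : W → W → ℕ} {A S : Finset W} {x y : W} (hxy : x ≠ y)
    (hx : x ∈ A) (hy : y ∈ A) (hS : S ⊆ A) (hnonsep : x ∈ S ↔ y ∈ S) :
    cutA (contractW w x y) (A.erase y) (S.erase y) = cutA w A S := by
  by_cases hyS : y ∈ S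
  · have hxS : x ∈ S := hnonsep.mpr hyS
    have hAS : (A.erase y) \ (S.erase y) = A \ S := by
      ext z
      simp only [mem_sdiff, mem_erase]
      constructor
      · rintro ⟨⟨hzy, hzA⟩, hz⟩
        exact ⟨hzA, fun hzS => hz ⟨hzy, hzS⟩⟩
      · rintro ⟨hzA, hzS⟩
        exact ⟨⟨fun h => hzS (h ▸ hyS), hzA⟩, fun h => hzS h.2⟩
    rw [cutA, hAS]
    have hpt : ∀ u ∈ S.erase y, ∀ v ∈ A \ S,
        contractW w x y u v = w u v + (if u = x then w y v else 0) := by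
      intro u hu v hv
      rw [mem_erase] at hu
      rw [mem_sdiff] at hv
      have huv : u ≠ v := fun h => hv.2 (h ▸ hu.2)
      have hvy : v ≠ y := fun h => hv.2 (h ▸ hyS)
      have hvx : v ≠ x := fun h => hv.2 (h ▸ hxS)
      rw [contractW]
      simp [huv, hu.1, hvy, hvx]
    rw [Finset.sum_congr rfl (fun u hu => Finset.sum_congr rfl (fun v hv => hpt u hu v hv))]
    have : ∀ u ∈ S.erase y, (∑ v ∈ A \ S, (w u v + (if u = x then w y v else 0)))
        = (∑ v ∈ A \ S, w u v) + (if u = x then ∑ v ∈ A \ S, w y v else 0) := by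
      intro u _
      rw [Finset.sum_add_distrib]
      congr 1
      by_cases h : u = x <;> simp [h]
    rw [Finset.sum_congr rfl this, Finset.sum_add_distrib]
    have hxS' : x ∈ S.erase y := mem_erase.mpr ⟨hxy, hxS⟩
    rw [Finset.sum_ite_eq' (S.erase y) x (fun _ => ∑ v ∈ A \ S, w y v)]
    rw [if_pos hxS']
    rw [cutA, ← Finset.add_sum_erase S _ hyS]
    ring
  · have hxS : x ∉ S := fun h => hyS (hnonsep.mp h)
    have hSe : S.erase y = S := erase_eq_of_notMem hyS
    have hAS : (A.erase y) \ S = (A \ S).erase y := by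
      ext z
      simp only [mem_sdiff, mem_erase]
      tauto
    rw [cutA, hSe, hAS]
    have hpt : ∀ u ∈ S, ∀ v ∈ (A \ S).erase y,
        contractW w x y u v = w u v + (if v = x then w u y else 0) := by
      intro u hu v hv
      rw [mem_erase, mem_sdiff] at hv
      have huv : u ≠ v := fun h => hv.2.2 (h ▸ hu)
      have huy : u ≠ y := fun h => hyS (h ▸ hu)
      have hux : u ≠ x := fun h => hxS (h ▸ hu)
      rw [contractW]
      simp [huv, huy, hv.1, hux]
    rw [Finset.sum_congr rfl (fun u hu => Finset.sum_congr rfl (fun v hv => hpt u hu v hv))]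
    rw [cutA]
    refine Finset.sum_congr rfl (fun u hu => ?_)
    rw [Finset.sum_add_distrib]
    have hxmem : x ∈ (A \ S).erase y := mem_erase.mpr ⟨hxy, mem_sdiff.mpr ⟨hx, hxS⟩⟩
    rw [Finset.sum_ite_eq' ((A \ S).erase y) x (fun _ => w u y), if_pos hxmem]
    rw [← Finset.add_sum_erase (A \ S) _ (mem_sdiff.mpr ⟨hy, hyS⟩)]
    ring
  
end Stmt2Aux

namespace Stmt2Aux
variable {W : Type} [DecidableEq W]

lemma choose_id {t b : ℕ} (hb : b < t) :
    t * Nat.choose (t - 1) b = (t - b) * Nat.choose t b := by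
  obtain ⟨s, rfl⟩ : ∃ s, t = s + 1 := ⟨t - 1, by omega⟩
  have h1 := Nat.add_one_mul_choose_eq s b
  have h2 := Nat.choose_succ_right_eq (s + 1) b
  rw [Nat.add_sub_cancel, h1, h2, Nat.mul_comm]

lemma contractW_symm {w : W → W → ℕ} (hsymm : ∀ u v, w u v = w v u) (x y : W) :
    ∀ u v, contractW w x y u v = contractW w x y v u := by
  intro u v
  rw [contractW, contractW]
  rw [if_congr (show (u = v ∨ u = y ∨ v = y) ↔ (v = u ∨ v = y ∨ u = y) by tauto) rfl rfl]
  congr 1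
  rw [hsymm u v, hsymm y v, hsymm u y]
  ring

lemma contractW_supp {w : W → W → ℕ} {A : Finset W} (hsupp : ∀ u v, w u v ≠ 0 → u ∈ A ∧ v ∈ A)
    {x y : W} (hx : x ∈ A) :
    ∀ u v, contractW w x y u v ≠ 0 → u ∈ A.erase y ∧ v ∈ A.erase y := by
  intro u v h
  rw [contractW] at h
  by_cases hg : u = v ∨ u = y ∨ v = y
  · rw [if_pos hg] at h; exact absurd rfl h
  · rw [if_neg hg] at h
    push_neg at hg
    have h3 : w u v ≠ 0 ∨ (if u = x then w y v else 0) ≠ 0 ∨ (if v = x then w u y else 0) ≠ 0 := by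
      by_contra hc
      push_neg at hc
      omega
    have huA : u ∈ A := by
      rcases h3 with h3 | h3 | h3
      · exact (hsupp u v h3).1
      · by_cases h4 : u = x
        · exact h4 ▸ hx
        · rw [if_neg h4] at h3; exact absurd rfl h3
      · by_cases h4 : v = x
        · rw [if_pos h4] at h3; exact (hsupp u y h3).1
        · rw [if_neg h4] at h3; exact absurd rfl h3
    have hvA : v ∈ A := by
      rcases h3 with h3 | h3 | h3
      · exact (hsupp u v h3).2
      · by_cases h4 : u = x
        · rw [if_pos h4] at h3; exact (hsupp y v h3).2
        · rw [if_neg h4] at h3; exact absurd rfl h3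
      · by_cases h4 : v = x
        · exact h4 ▸ hx
        · rw [if_neg h4] at h3; exact absurd rfl h3
    exact ⟨mem_erase.mpr ⟨hg.2.1, huA⟩, mem_erase.mpr ⟨hg.2.2, hvA⟩⟩

lemma contractW_diag (w : W → W → ℕ) (x y : W) : ∀ u, contractW w x y u u = 0 := by
  intro u; rw [contractW, if_pos (Or.inl rfl)]

lemma lift_spec {A S' : Finset W} {x y : W} (hxy : x ≠ y) (hx : x ∈ A) (hy : y ∈ A)
    (hS' : S' ⊆ A.erase y) (hne : S'.Nonempty) (hneq : S' ≠ A.erase y) :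
    ∃ S : Finset W, S ⊆ A ∧ S.Nonempty ∧ S ≠ A ∧ (x ∈ S ↔ y ∈ S) ∧ S.erase y = S' := by
  have hyS' : y ∉ S' := fun h => (mem_erase.mp (hS' h)).1 rfl
  by_cases hxS' : x ∈ S'
  · refine ⟨insert y S', ?_, ⟨y, mem_insert_self y S'⟩, ?_, ?_, Finset.erase_insert hyS'⟩
    · intro z hz
      rcases mem_insert.mp hz with rfl | hz
      · exact hy
      · exact (mem_erase.mp (hS' hz)).2
    · intro h
      apply hneq
      rw [← h, Finset.erase_insert hyS']
    · simp [hxS', mem_insert]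
  · refine ⟨S', fun z hz => (mem_erase.mp (hS' hz)).2, hne, ?_, ?_,
      Finset.erase_eq_of_notMem hyS'⟩
    · intro h; rw [h] at hyS'; exact hyS' hy
    · simp [hxS', hyS']

lemma contract_min {w : W → W → ℕ} {A : Finset W} {k : ℕ} {x y : W} (hxy : x ≠ y)
    (hx : x ∈ A) (hy : y ∈ A)
    (hmin : ∀ S : Finset W, S ⊆ A → S.Nonempty → S ≠ A → k ≤ cutA w A S) :
    ∀ S' : Finset W, S' ⊆ A.erase y → S'.Nonempty → S' ≠ A.erase y →
      k ≤ cutA (contractW w x y) (A.erase y) S' := by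
  intro S' hS' hne hneq
  obtain ⟨S, hSA, hSne, hSneq, hnonsep, hE⟩ := lift_spec hxy hx hy hS' hne hneq
  rw [← hE, contract_cut hxy hx hy hSA hnonsep]
  exact hmin S hSA hSne hSneq

lemma contract_inj {w : W → W → ℕ} {A : Finset W} {b k : ℕ} {x y : W} (hxy : x ≠ y)
    (hx : x ∈ A) (hy : y ∈ A) :
    ((smallCuts w A b k).filter (fun S => x ∈ S ↔ y ∈ S)).card
      ≤ (smallCuts (contractW w x y) (A.erase y) b k).card := by
  apply Finset.card_le_card_of_injOn (fun S => S.erase y)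
  · intro S hS
    rw [Finset.mem_coe, Finset.mem_filter] at hS
    obtain ⟨hSmem, hnonsep⟩ := hS
    rw [smallCuts, Finset.mem_filter, Finset.mem_powerset] at hSmem
    obtain ⟨hSA, hSne, hSneq, hsmall⟩ := hSmem
    rw [Finset.mem_coe, smallCuts, Finset.mem_filter, Finset.mem_powerset]
    refine ⟨Finset.erase_subset_erase y hSA, ?_, ?_, ?_⟩
    · obtain ⟨z, hz⟩ := hSne
      by_cases hzy : z = y
      · have hyS : y ∈ S := hzy ▸ hz
        have hxS : x ∈ S := hnonsep.mpr hyS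
        exact ⟨x, mem_erase.mpr ⟨hxy, hxS⟩⟩
      · exact ⟨z, mem_erase.mpr ⟨hzy, hz⟩⟩
    · intro h
      by_cases hyS : y ∈ S
      · apply hSneq
        have := congrArg (insert y) h
        rwa [Finset.insert_erase hyS, Finset.insert_erase hy] at this
      · simp only [Finset.erase_eq_of_notMem hyS] at h
        have hxA : x ∈ A.erase y := mem_erase.mpr ⟨hxy, hx⟩
        rw [← h] at hxA
        exact hyS (hnonsep.mp hxA)
    · rw [contract_cut hxy hx hy hSA hnonsep]
      exact hsmall
  · intro S₁ h₁ S₂ h₂ hE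
    simp only [Finset.coe_filter, Set.mem_setOf_eq] at h₁ h₂
    obtain ⟨hS₁mem, hns₁⟩ := h₁
    obtain ⟨hS₂mem, hns₂⟩ := h₂
    simp only at hE
    have hx1 : x ∈ S₁ ↔ x ∈ S₂ := by
      constructor
      · intro h
        have : x ∈ S₁.erase y := mem_erase.mpr ⟨hxy, h⟩
        rw [hE] at this
        exact (mem_erase.mp this).2
      · intro h
        have : x ∈ S₂.erase y := mem_erase.mpr ⟨hxy, h⟩
        rw [← hE] at this
        exact (mem_erase.mp this).2
    ext z
    by_cases hzy : z = y
    · subst hzy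
      rw [← hns₁, ← hns₂]
      exact hx1
    · constructor
      · intro h
        have : z ∈ S₁.erase y := mem_erase.mpr ⟨hzy, h⟩
        rw [hE] at this
        exact (mem_erase.mp this).2
      · intro h
        have : z ∈ S₂.erase y := mem_erase.mpr ⟨hzy, h⟩
        rw [← hE] at this
        exact (mem_erase.mp this).2

lemma final_arith {N M ff ff' b k t q : ℕ}
    (h1 : N * M ≤ N * (b * k) + ff' * M) (h2 : t * k ≤ M)
    (h3 : t * ff' = q * ff) (hk : 1 ≤ k) (hb : 1 ≤ b) (hq : 1 ≤ q) (ht : t = b + q) :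
    N ≤ ff := by
  have h1' : (N : ℝ) * M ≤ N * (b * k) + ff' * M := by exact_mod_cast h1
  have h2' : (t : ℝ) * k ≤ M := by exact_mod_cast h2
  have h3' : (t : ℝ) * ff' = (q : ℝ) * ff := by exact_mod_cast h3
  have hk' : (1:ℝ) ≤ k := by exact_mod_cast hk
  have hb' : (1:ℝ) ≤ b := by exact_mod_cast hb
  have hq' : (1:ℝ) ≤ q := by exact_mod_cast hq
  have ht' : (t:ℝ) = (b:ℝ) + q := by exact_mod_cast ht
  have hf'nn : (0:ℝ) ≤ (ff' : ℝ) := Nat.cast_nonneg _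
  have hNnn : (0:ℝ) ≤ (N : ℝ) := Nat.cast_nonneg _
  have hMbk : (b:ℝ) * k < (M:ℝ) := by nlinarith
  have s1 : (N:ℝ) * ((M:ℝ) - b*k) ≤ ff' * M := by nlinarith
  have s2 : (q:ℝ) * M ≤ t * ((M:ℝ) - b*k) := by nlinarith
  have s3 : (N:ℝ) * (((M:ℝ) - b*k) * q) ≤ (ff:ℝ) * (((M:ℝ) - b*k) * q) := by
    calc (N:ℝ) * (((M:ℝ) - b*k) * q) = ((N:ℝ) * ((M:ℝ) - b*k)) * q := by ring
      _ ≤ ((ff':ℝ) * M) * q := by nlinarith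
      _ = (ff':ℝ) * ((q:ℝ) * M) := by ring
      _ ≤ (ff':ℝ) * ((t:ℝ) * ((M:ℝ) - b*k)) := by nlinarith
      _ = ((t:ℝ) * ff') * ((M:ℝ) - b*k) := by ring
      _ = ((q:ℝ) * ff) * ((M:ℝ) - b*k) := by rw [h3']
      _ = (ff:ℝ) * (((M:ℝ) - b*k) * q) := by ring
  have hpos : (0:ℝ) < ((M:ℝ) - b*k) * q := by nlinarith
  have : (N:ℝ) ≤ (ff:ℝ) := le_of_mul_le_mul_right s3 hpos
  exact_mod_cast this


lemma count_small_cuts : ∀ (t : ℕ) (A : Finset W) (w : W → W → ℕ) (k b : ℕ),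
    A.card = t →
    (∀ u v, w u v ≠ 0 → u ∈ A ∧ v ∈ A) → (∀ u v, w u v = w v u) → (∀ u, w u u = 0) →
    1 ≤ k → 1 ≤ b → b ≤ t →
    (∀ S : Finset W, S ⊆ A → S.Nonempty → S ≠ A → k ≤ cutA w A S) →
    (smallCuts w A b k).card ≤ 2 ^ b * t.choose b := by
  intro t
  induction t using Nat.strong_induction_on with
  | _ t IH =>
  intro A w k b hcard hsupp hsymm hdiag hk hb hbt hmin
  rcases eq_or_lt_of_le hbt with hbe | hblt
  · calc (smallCuts w A b k).card ≤ A.powerset.card :=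
          Finset.card_le_card (Finset.filter_subset _ _)
      _ = 2 ^ t := by rw [Finset.card_powerset, hcard]
      _ ≤ 2 ^ b * t.choose b := by rw [← hbe, Nat.choose_self, mul_one]
  · have ht2 : 2 ≤ t := by omega
    set N := (smallCuts w A b k).card with hN
    set M := ∑ u ∈ A, ∑ v ∈ A, w u v with hM
    set f' := 2 ^ b * (t - 1).choose b with hf'
    set f := 2 ^ b * t.choose b with hf
    have hdeg : ∀ z ∈ A, k ≤ ∑ v ∈ A, w z v := by
      intro z hz
      have hzA : ({z} : Finset W) ≠ A := by
        intro h
        rw [← h] at hcard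
        simp only [Finset.card_singleton] at hcard
        omega
      have := hmin {z} (Finset.singleton_subset_iff.mpr hz) (Finset.singleton_nonempty z) hzA
      rw [cutA, Finset.sum_singleton] at this
      exact this.trans (Finset.sum_le_sum_of_subset Finset.sdiff_subset)
    have hMtk : t * k ≤ M := by
      calc t * k = ∑ _u ∈ A, k := by rw [Finset.sum_const, hcard, smul_eq_mul]
        _ ≤ M := Finset.sum_le_sum hdeg
    have hsep : ∀ S ∈ smallCuts w A b k,
        M ≤ b * k + ∑ u ∈ A, ∑ v ∈ A, (if (u ∈ S ↔ v ∈ S) then w u v else 0) := by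
      intro S hSmem
      rw [smallCuts, Finset.mem_filter, Finset.mem_powerset] at hSmem
      obtain ⟨hSA, _, _, hsmall⟩ := hSmem
      have key : M = 2 * cutA w A S
          + ∑ u ∈ A, ∑ v ∈ A, (if (u ∈ S ↔ v ∈ S) then w u v else 0) := by
        have hsplit : ∀ g : W → W → ℕ, ∑ u ∈ A, ∑ v ∈ A, g u v =
            ((∑ u ∈ S, ∑ v ∈ S, g u v) + (∑ u ∈ S, ∑ v ∈ A \ S, g u v))
            + ((∑ u ∈ A \ S, ∑ v ∈ S, g u v) + (∑ u ∈ A \ S, ∑ v ∈ A \ S, g u v)) := by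
          intro g
          have inner : ∀ u : W, ∑ v ∈ A, g u v = (∑ v ∈ S, g u v) + ∑ v ∈ A \ S, g u v := by
            intro u
            rw [add_comm, Finset.sum_sdiff hSA]
          rw [← Finset.sum_sdiff hSA]
          simp only [inner]
          rw [Finset.sum_add_distrib, Finset.sum_add_distrib]
          ring
        rw [hM, hsplit (fun u v => w u v), hsplit (fun u v => if (u ∈ S ↔ v ∈ S) then w u v else 0)]
        have e1 : ∑ u ∈ S, ∑ v ∈ S, (if (u ∈ S ↔ v ∈ S) then w u v else 0)
            = ∑ u ∈ S, ∑ v ∈ S, w u v :=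
          Finset.sum_congr rfl fun u hu => Finset.sum_congr rfl fun v hv => by
            rw [if_pos (iff_of_true hu hv)]
        have e2 : ∑ u ∈ S, ∑ v ∈ A \ S, (if (u ∈ S ↔ v ∈ S) then w u v else 0) = 0 :=
          Finset.sum_eq_zero fun u hu => Finset.sum_eq_zero fun v hv => by
            rw [mem_sdiff] at hv
            rw [if_neg (by simp [hu, hv.2])]
        have e3 : ∑ u ∈ A \ S, ∑ v ∈ S, (if (u ∈ S ↔ v ∈ S) then w u v else 0) = 0 :=
          Finset.sum_eq_zero fun u hu => Finset.sum_eq_zero fun v hv => by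
            rw [mem_sdiff] at hu
            rw [if_neg (by simp [hv, hu.2])]
        have e4 : ∑ u ∈ A \ S, ∑ v ∈ A \ S, (if (u ∈ S ↔ v ∈ S) then w u v else 0)
            = ∑ u ∈ A \ S, ∑ v ∈ A \ S, w u v :=
          Finset.sum_congr rfl fun u hu => Finset.sum_congr rfl fun v hv => by
            rw [mem_sdiff] at hu hv
            rw [if_pos (iff_of_false hu.2 hv.2)]
        have e5 : ∑ u ∈ A \ S, ∑ v ∈ S, w u v = cutA w A S := by
          rw [Finset.sum_comm, cutA]
          exact Finset.sum_congr rfl fun u _ => Finset.sum_congr rfl fun v _ => hsymm v u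
        rw [e1, e2, e3, e4, e5, cutA]
        ring
      omega
    have hpair : ∀ u ∈ A, ∀ v ∈ A,
        ((smallCuts w A b k).filter (fun S => u ∈ S ↔ v ∈ S)).card * w u v ≤ f' * w u v := by
      intro u hu v hv
      by_cases huv : u = v
      · subst huv; rw [hdiag]; simp
      · refine Nat.mul_le_mul_right _ ?_
        refine (contract_inj huv hu hv).trans ?_
        refine IH (t - 1) (by omega) (A.erase v) (contractW w u v) k b
          (by rw [Finset.card_erase_of_mem hv, hcard]) (contractW_supp hsupp hu)
          (contractW_symm hsymm u v) (contractW_diag w u v) hk hb (by omega)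
          (contract_min huv hu hv hmin)
    -- summation / double counting
    have hsum : N * M ≤ N * (b * k) + f' * M := by
      have h1 : N * M ≤ N * (b * k)
          + ∑ S ∈ smallCuts w A b k, ∑ u ∈ A, ∑ v ∈ A,
              (if (u ∈ S ↔ v ∈ S) then w u v else 0) := by
        have := Finset.sum_le_sum hsep
        rw [Finset.sum_const, smul_eq_mul, Finset.sum_add_distrib, Finset.sum_const,
          smul_eq_mul] at this
        exact this
      have h2 : ∑ S ∈ smallCuts w A b k, ∑ u ∈ A, ∑ v ∈ A,
            (if (u ∈ S ↔ v ∈ S) then w u v else 0)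
          = ∑ u ∈ A, ∑ v ∈ A,
              ((smallCuts w A b k).filter (fun S => u ∈ S ↔ v ∈ S)).card * w u v := by
        rw [Finset.sum_comm]
        refine Finset.sum_congr rfl fun u _ => ?_
        rw [Finset.sum_comm]
        refine Finset.sum_congr rfl fun v _ => ?_
        rw [← Finset.sum_filter, Finset.sum_const, smul_eq_mul]
      have h3 : ∑ u ∈ A, ∑ v ∈ A,
            ((smallCuts w A b k).filter (fun S => u ∈ S ↔ v ∈ S)).card * w u v
          ≤ f' * M := by
        rw [hM, Finset.mul_sum]
        refine Finset.sum_le_sum fun u hu => ?_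
        rw [Finset.mul_sum]
        exact Finset.sum_le_sum fun v hv => hpair u hu v hv
      calc N * M ≤ _ := h1
        _ ≤ N * (b * k) + f' * M := by omega
    -- final arithmetic
    obtain ⟨q, hq⟩ : ∃ q, t = b + q := ⟨t - b, by omega⟩
    have hq1 : 1 ≤ q := by omega
    have hid : t * f' = q * f := by
      have h := choose_id hblt
      have hqe : t - b = q := by omega
      rw [hqe] at h
      rw [hf', hf, mul_left_comm, h, mul_left_comm]
    exact final_arith hsum hMtk hid hk hb hq1 hq

lemma count_graph {V : Type} [Fintype V] [DecidableEq V] (G : SimpleGraph V)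
    [DecidableRel G.Adj] (k j : ℕ) (hk : 1 ≤ k) (hj : 1 ≤ j) (hn : 2 ≤ Fintype.card V)
    (hmin : ∀ S : Finset V, S.Nonempty → S ≠ Finset.univ → k ≤ ∑ u ∈ S, ∑ v ∈ Sᶜ, (if G.Adj u v then 1 else 0)) :
    ((Finset.univ : Finset (Finset V)).filter
        (fun S => S.Nonempty ∧ S ≠ Finset.univ ∧ (∑ u ∈ S, ∑ v ∈ Sᶜ, (if G.Adj u v then 1 else 0)) ≤ j * k)).card
      ≤ (Fintype.card V) ^ (4 * j) := by
  set n := Fintype.card V with hnn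
  set w : V → V → ℕ := fun u v => if G.Adj u v then 1 else 0 with hw
  have hcuteq : ∀ S : Finset V, cutA w Finset.univ S = ∑ u ∈ S, ∑ v ∈ Sᶜ, w u v := by
    intro S
    rw [cutA]
    refine Finset.sum_congr rfl fun u _ => ?_
    rw [Finset.compl_eq_univ_sdiff]
  by_cases hbn : 2 * j ≤ n
  · have key := count_small_cuts n Finset.univ w k (2 * j)
      (by rw [Finset.card_univ]) (fun u v _ => ⟨Finset.mem_univ u, Finset.mem_univ v⟩)
      (fun u v => by
        show (if G.Adj u v then 1 else 0) = (if G.Adj v u then 1 else 0)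
        by_cases h : G.Adj u v
        · rw [if_pos h, if_pos h.symm]
        · rw [if_neg h, if_neg (fun h2 => h h2.symm)])
      (fun u => by show (if G.Adj u u then 1 else 0) = 0; rw [if_neg (G.irrefl)])
      hk (by omega) hbn
      (fun S _ hne hneq => by rw [hcuteq]; exact hmin S hne hneq)
    have hsub : ((Finset.univ : Finset (Finset V)).filter
        (fun S => S.Nonempty ∧ S ≠ Finset.univ ∧ (∑ u ∈ S, ∑ v ∈ Sᶜ, w u v) ≤ j * k))
        ⊆ smallCuts w Finset.univ (2 * j) k := by
      intro S hS
      rw [Finset.mem_filter] at hS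
      rw [smallCuts, Finset.mem_filter, Finset.mem_powerset]
      refine ⟨Finset.subset_univ S, hS.2.1, hS.2.2.1, ?_⟩
      rw [hcuteq]
      calc 2 * (∑ u ∈ S, ∑ v ∈ Sᶜ, w u v) ≤ 2 * (j * k) :=
            Nat.mul_le_mul_left 2 hS.2.2.2
        _ = 2 * j * k := by ring
    calc _ ≤ (smallCuts w Finset.univ (2*j) k).card := Finset.card_le_card hsub
      _ ≤ 2 ^ (2*j) * n.choose (2*j) := key
      _ ≤ n ^ (2*j) * n ^ (2*j) := by
          exact Nat.mul_le_mul (Nat.pow_le_pow_left hn _) (Nat.choose_le_pow n (2*j))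
      _ = n ^ (4*j) := by rw [← pow_add]; congr 1; omega
  · calc _ ≤ ((Finset.univ : Finset (Finset V))).card :=
          Finset.card_le_card (Finset.filter_subset _ _)
      _ = 2 ^ n := by rw [Finset.card_univ, Fintype.card_finset]
      _ ≤ n ^ n := Nat.pow_le_pow_left hn n
      _ ≤ n ^ (4*j) := Nat.pow_le_pow_right (by omega) (by omega)

end Stmt2Aux

open Finset MeasureTheory ProbabilityTheory Real

namespace Stmt2Aux

lemma exp_le_quad {t : ℝ} (ht : |t| ≤ 1) : Real.exp t ≤ 1 + t + t ^ 2 := by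
  have h := Real.exp_bound ht (n := 3) (by norm_num)
  norm_num [Finset.sum_range_succ, Nat.factorial] at h
  have h3 : |t| ^ 3 ≤ t ^ 2 := by
    have : |t| ^ 3 ≤ |t| ^ 2 := pow_le_pow_of_le_one (abs_nonneg t) ht (by norm_num)
    rwa [sq_abs] at this
  have h5 := (abs_le.mp h).2
  nlinarith [sq_nonneg t]

variable {Ω : Type} [MeasurableSpace Ω] {ι : Type}

lemma bern_mgf_bound (μ : Measure Ω) [IsProbabilityMeasure μ]
    (X : ι → Ω → Bool) (hX : ∀ e, Measurable (X e))
    (hind : iIndepFun X μ) (s : Finset ι) {p : ℝ}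
    (hp0 : 0 < p) (hp1 : p ≤ 1)
    (hprob : ∀ e ∈ s, μ {ω | X e ω = true} = ENNReal.ofReal p) (t : ℝ) :
    mgf (∑ e ∈ s, fun ω => (if X e ω then (1:ℝ) else 0)) μ t
      ≤ Real.exp ((Real.exp t - 1) * (p * s.card)) := by
  classical
  set Y : ι → Ω → ℝ := fun e ω => (if X e ω then (1:ℝ) else 0) with hY
  have hg : Measurable (fun b : Bool => (if b then (1:ℝ) else 0)) := fun _ _ => trivial
  have hYmeas : ∀ e, Measurable (Y e) := fun e => hg.comp (hX e)
  have hYind : iIndepFun Y μ :=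
    hind.comp (fun _ b => if b then (1:ℝ) else 0) (fun _ => hg)
  rw [iIndepFun.mgf_sum hYind hYmeas s]
  have hval : ∀ e ∈ s, mgf (Y e) μ t = 1 + (Real.exp t - 1) * p := by
    intro e he
    have hset : MeasurableSet {ω | X e ω = true} := (hX e) (measurableSet_singleton true)
    have hind1 : Y e = Set.indicator {ω | X e ω = true} (fun _ => (1:ℝ)) := by
      funext ω
      by_cases h : X e ω
      · simp [hY, h, Set.indicator_of_mem, Set.mem_setOf_eq]
      · simp [hY, h, Set.indicator_of_notMem, Set.mem_setOf_eq]
    have hYint : Integrable (Y e) μ := by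
      rw [hind1]
      exact (integrable_const (1:ℝ)).indicator hset
    have hYval : ∫ ω, Y e ω ∂μ = p := by
      rw [hind1, integral_indicator_const (1:ℝ) hset, measureReal_def, hprob e he, smul_eq_mul, mul_one,
        ENNReal.toReal_ofReal hp0.le]
    have hexpeq : (fun ω => Real.exp (t * Y e ω))
        = fun ω => 1 + (Real.exp t - 1) * Y e ω := by
      funext ω
      have : Y e ω = if X e ω then 1 else 0 := rfl
      rw [this]
      by_cases h : X e ω = true
      · rw [if_pos h, mul_one]; ring
      · rw [if_neg h, mul_zero, Real.exp_zero]; ring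
    rw [mgf, hexpeq]
    rw [integral_add (integrable_const 1) (hYint.const_mul _), integral_const,
      integral_const_mul, hYval, measureReal_def, measure_univ, ENNReal.toReal_one, smul_eq_mul, mul_one]
  calc ∏ e ∈ s, mgf (Y e) μ t ≤ ∏ e ∈ s, Real.exp ((Real.exp t - 1) * p) := by
        refine Finset.prod_le_prod (fun e he => ?_) (fun e he => ?_)
        · rw [hval e he]
          nlinarith [Real.exp_pos t]
        · rw [hval e he]
          have := Real.add_one_le_exp ((Real.exp t - 1) * p)
          linarith
    _ = Real.exp ((Real.exp t - 1) * (p * s.card)) := by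
        rw [Finset.prod_const, ← Real.exp_nat_mul]
        congr 1
        ring

lemma bern_tails (μ : Measure Ω) [IsProbabilityMeasure μ]
    (X : ι → Ω → Bool) (hX : ∀ e, Measurable (X e))
    (hind : iIndepFun X μ) (s : Finset ι) {p : ℝ}
    (hp0 : 0 < p) (hp1 : p ≤ 1)
    (hprob : ∀ e ∈ s, μ {ω | X e ω = true} = ENNReal.ofReal p)
    {ε : ℝ} (hε0 : 0 < ε) (hε1 : ε < 1) :
    μ {ω | (∑ e ∈ s, (if X e ω then (1:ℝ) else 0)) ≤ (1-ε)*(p*s.card)}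
      + μ {ω | (1+ε)*(p*s.card) ≤ ∑ e ∈ s, (if X e ω then (1:ℝ) else 0)}
      ≤ ENNReal.ofReal (2 * Real.exp (-(ε^2*(p*s.card)/4))) := by
  classical
  set Y : ι → Ω → ℝ := fun e ω => (if X e ω then (1:ℝ) else 0) with hY
  have hg : Measurable (fun b : Bool => (if b then (1:ℝ) else 0)) := fun _ _ => trivial
  have hYmeas : ∀ e, Measurable (Y e) := fun e => hg.comp (hX e)
  set Z : Ω → ℝ := ∑ e ∈ s, Y e with hZ
  have hZapp : ∀ ω, Z ω = ∑ e ∈ s, Y e ω := by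
    intro ω; rw [hZ]; simp [Finset.sum_apply]
  have hZmeas : Measurable Z := by
    have : Measurable fun a => ∑ e ∈ s, Y e a := Finset.measurable_sum s (fun e _ => hYmeas e)
    convert this using 1
    funext ω; exact hZapp ω
  have hYle : ∀ e ω, Y e ω ≤ 1 := by
    intro e ω
    have : Y e ω = if X e ω then 1 else 0 := rfl
    rw [this]; split <;> norm_num
  have hYnn : ∀ e ω, 0 ≤ Y e ω := by
    intro e ω
    have : Y e ω = if X e ω then 1 else 0 := rfl
    rw [this]; split <;> norm_num
  have hZ0 : ∀ ω, 0 ≤ Z ω := by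
    intro ω
    rw [hZapp]
    exact Finset.sum_nonneg fun e _ => hYnn e ω
  have hZm : ∀ ω, Z ω ≤ s.card := by
    intro ω
    rw [hZapp]
    calc ∑ e ∈ s, Y e ω ≤ ∑ _e ∈ s, (1:ℝ) := Finset.sum_le_sum fun e _ => hYle e ω
      _ = s.card := by simp
  have hint : ∀ t : ℝ, Integrable (fun ω => Real.exp (t * Z ω)) μ := by
    intro t
    refine Integrable.mono' (integrable_const (Real.exp (|t| * s.card)))
      ((hZmeas.const_mul t).exp.aestronglyMeasurable) (ae_of_all μ fun ω => ?_)
    rw [Real.norm_eq_abs, abs_of_pos (Real.exp_pos _), Real.exp_le_exp]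
    calc t * Z ω ≤ |t| * Z ω := mul_le_mul_of_nonneg_right (le_abs_self t) (hZ0 ω)
      _ ≤ |t| * s.card := mul_le_mul_of_nonneg_left (hZm ω) (abs_nonneg t)
  set m : ℝ := (s.card : ℝ) with hm
  have hm0 : 0 ≤ m := Nat.cast_nonneg _
  have hpm0 : 0 ≤ p * m := by positivity
  -- upper tail
  have hup : (μ {ω | (1+ε)*(p*m) ≤ Z ω}).toReal ≤ Real.exp (-(ε^2*(p*m)/4)) := by
    have h1 := measure_ge_le_exp_mul_mgf (X := Z) (μ := μ) (t := ε/2) ((1+ε)*(p*m))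
      (by linarith) (hint (ε/2))
    have h2 := bern_mgf_bound μ X hX hind s hp0 hp1 hprob (ε/2)
    rw [← hZ] at h2
    have h3 : Real.exp (-(ε/2) * ((1+ε)*(p*m))) * mgf Z μ (ε/2)
        ≤ Real.exp (-(ε/2) * ((1+ε)*(p*m)) + (Real.exp (ε/2) - 1) * (p*m)) := by
      rw [Real.exp_add]
      exact mul_le_mul_of_nonneg_left h2 (Real.exp_pos _).le
    have h4 : Real.exp (-(ε/2) * ((1+ε)*(p*m)) + (Real.exp (ε/2) - 1) * (p*m))
        ≤ Real.exp (-(ε^2*(p*m)/4)) := by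
      rw [Real.exp_le_exp]
      have hq : Real.exp (ε/2) ≤ 1 + (ε/2) + (ε/2)^2 :=
        exp_le_quad (by rw [abs_of_pos (by linarith)]; linarith)
      nlinarith [hpm0, sq_nonneg ε]
    exact h1.trans (h3.trans h4)
  -- lower tail
  have hlo : (μ {ω | Z ω ≤ (1-ε)*(p*m)}).toReal ≤ Real.exp (-(ε^2*(p*m)/4)) := by
    have h1 := measure_le_le_exp_mul_mgf (X := Z) (μ := μ) (t := -(ε/2)) ((1-ε)*(p*m))
      (by linarith) (hint (-(ε/2)))
    have h2 := bern_mgf_bound μ X hX hind s hp0 hp1 hprob (-(ε/2))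
    rw [← hZ] at h2
    have h3 : Real.exp (-(-(ε/2)) * ((1-ε)*(p*m))) * mgf Z μ (-(ε/2))
        ≤ Real.exp (-(-(ε/2)) * ((1-ε)*(p*m)) + (Real.exp (-(ε/2)) - 1) * (p*m)) := by
      rw [Real.exp_add]
      exact mul_le_mul_of_nonneg_left h2 (Real.exp_pos _).le
    have h4 : Real.exp (-(-(ε/2)) * ((1-ε)*(p*m)) + (Real.exp (-(ε/2)) - 1) * (p*m))
        ≤ Real.exp (-(ε^2*(p*m)/4)) := by
      rw [Real.exp_le_exp]
      have hq : Real.exp (-(ε/2)) ≤ 1 + (-(ε/2)) + (-(ε/2))^2 :=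
        exp_le_quad (by rw [abs_of_neg (by linarith)]; linarith)
      nlinarith [hpm0, sq_nonneg ε]
    exact h1.trans (h3.trans h4)
  have hfin1 : μ {ω | Z ω ≤ (1-ε)*(p*m)} ≠ ⊤ := measure_ne_top μ _
  have hfin2 : μ {ω | (1+ε)*(p*m) ≤ Z ω} ≠ ⊤ := measure_ne_top μ _
  have e1 : μ {ω | Z ω ≤ (1-ε)*(p*m)} ≤ ENNReal.ofReal (Real.exp (-(ε^2*(p*m)/4))) := by
    rw [← ENNReal.ofReal_toReal hfin1]
    exact ENNReal.ofReal_le_ofReal hlo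
  have e2 : μ {ω | (1+ε)*(p*m) ≤ Z ω} ≤ ENNReal.ofReal (Real.exp (-(ε^2*(p*m)/4))) := by
    rw [← ENNReal.ofReal_toReal hfin2]
    exact ENNReal.ofReal_le_ofReal hup
  have hZeq : ∀ ω, Z ω = ∑ e ∈ s, (if X e ω then (1:ℝ) else 0) := by
    intro ω; rw [hZ]; simp [hY]
  have hs1 : {ω | (∑ e ∈ s, (if X e ω then (1:ℝ) else 0)) ≤ (1-ε)*(p*s.card)}
      = {ω | Z ω ≤ (1-ε)*(p*m)} := by
    ext ω; rw [Set.mem_setOf_eq, Set.mem_setOf_eq, hZeq ω, hm]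
  have hs2 : {ω | (1+ε)*(p*s.card) ≤ ∑ e ∈ s, (if X e ω then (1:ℝ) else 0)}
      = {ω | (1+ε)*(p*m) ≤ Z ω} := by
    ext ω; rw [Set.mem_setOf_eq, Set.mem_setOf_eq, hZeq ω, hm]
  rw [hs1, hs2]
  calc μ {ω | Z ω ≤ (1-ε)*(p*m)} + μ {ω | (1+ε)*(p*m) ≤ Z ω}
      ≤ ENNReal.ofReal (Real.exp (-(ε^2*(p*m)/4))) + ENNReal.ofReal (Real.exp (-(ε^2*(p*m)/4))) :=
        add_le_add e1 e2
    _ = ENNReal.ofReal (2 * Real.exp (-(ε^2*(p*m)/4))) := by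
        rw [← ENNReal.ofReal_add (Real.exp_pos _).le (Real.exp_pos _).le]
        congr 1; ring

end Stmt2Aux

namespace Stmt2Aux

lemma cutValN_le_sq {V : Type} [Fintype V] [DecidableEq V] (G : SimpleGraph V)
    [DecidableRel G.Adj] (S : Finset V) :
    cutValN G S ≤ Fintype.card V * Fintype.card V := by
  calc cutValN G S ≤ ∑ _u ∈ S, ∑ _v ∈ Sᶜ, 1 := by
        refine Finset.sum_le_sum fun u _ => Finset.sum_le_sum fun v _ => ?_
        split <;> norm_num
    _ = S.card * Sᶜ.card := by simp [mul_comm]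
    _ ≤ Fintype.card V * Fintype.card V :=
        Nat.mul_le_mul (Finset.card_le_univ S) (Finset.card_le_univ Sᶜ)

lemma cutVal_gWeight_cast {V : Type} [Fintype V] [DecidableEq V] (G : SimpleGraph V)
    [DecidableRel G.Adj] (S : Finset V) :
    cutVal (gWeight G) S = (cutValN G S : ℝ) := by
  rw [cutVal, cutValN]
  push_cast
  refine Finset.sum_congr rfl fun u _ => Finset.sum_congr rfl fun v _ => ?_
  rw [gWeight]

lemma cutVal_gWeight_nonneg {V : Type} [Fintype V] [DecidableEq V] (G : SimpleGraph V)
    [DecidableRel G.Adj] (S : Finset V) : 0 ≤ cutVal (gWeight G) S := by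
  rw [cutVal_gWeight_cast]
  positivity

end Stmt2Aux


set_option maxHeartbeats 1000000 in
open Stmt2Aux in
/-- For every `d ≥ 1` there is a constant `c > 0` such that: sampling the edges of a
`k`-connected graph on `n ≥ 2` vertices independently with probability
`p = min(1, c log n / (ε² k))`, giving sampled edges weight `1/p`, yields an
`ε`-sparsification with probability at least `1 - n^{-d}`. -/
theorem stmt2 (d : ℝ) (hd : 1 ≤ d) :
    ∃ c : ℝ, 0 < c ∧
      ∀ (V : Type) [Fintype V] [DecidableEq V] (G : SimpleGraph V) [DecidableRel G.Adj]
        (k : ℕ) (ε : ℝ) (Ω : Type) [MeasurableSpace Ω] (μ : Measure Ω)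
        [IsProbabilityMeasure μ] (X : Sym2 V → Ω → Bool),
        2 ≤ Fintype.card V → 1 ≤ k →
        (∀ S : Finset V, S.Nonempty → S ≠ Finset.univ → k ≤ cutValN G S) →
        0 < ε → ε < 1 →
        (∀ e, Measurable (X e)) →
        iIndepFun X μ →
        (∀ e ∈ G.edgeFinset, μ {ω | X e ω = true} =
          ENNReal.ofReal (min 1 (c * Real.log (Fintype.card V) / (ε ^ 2 * k)))) →
        μ {ω | IsSparsification ε (gWeight G)
            (fun u v => if G.Adj u v ∧ X s(u, v) ω = true
              then 1 / min 1 (c * Real.log (Fintype.card V) / (ε ^ 2 * k)) else 0)} ≥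
          ENNReal.ofReal (1 - (Fintype.card V : ℝ) ^ (-d)) := by

  refine ⟨8 * (d + 7), by linarith, ?_⟩
  set c := 8 * (d + 7) with hcdef
  intro V _ _ G _ k ε Ω _ μ _ X hn hk hmin hε0 hε1 hXmeas hXind hXprob
  classical
  set n := Fintype.card V with hndef
  set L := Real.log n with hLdef
  have hn1 : (1:ℝ) < n := by exact_mod_cast hn
  have hn0 : (0:ℝ) < n := by linarith
  have hL0 : 0 < L := Real.log_pos hn1
  have hc0 : (0:ℝ) < c := by rw [hcdef]; linarith
  have hk0 : (0:ℝ) < k := by exact_mod_cast hk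
  set q := c * L / (ε ^ 2 * k) with hqdef
  have hq0 : 0 < q := by
    rw [hqdef]
    positivity
  have hnd0 : (0:ℝ) ≤ (n:ℝ) ^ (-d) := Real.rpow_nonneg hn0.le _
  have hnd1 : (n:ℝ) ^ (-d) ≤ 1 :=
    Real.rpow_le_one_of_one_le_of_nonpos hn1.le (by linarith)
  set good := {ω | IsSparsification ε (gWeight G)
      (fun u v => if G.Adj u v ∧ X s(u, v) ω = true then 1 / min 1 q else 0)} with hgood
  show ENNReal.ofReal (1 - (n:ℝ) ^ (-d)) ≤ μ good
  by_cases hcase : 1 ≤ q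
  · -- p = 1 : all edges kept a.s.
    have hminq : min 1 q = 1 := min_eq_left hcase
    set T := ⋂ e ∈ G.edgeFinset, {ω | X e ω = true} with hT
    have hTsub : T ⊆ good := by
      intro ω hω
      rw [hgood, Set.mem_setOf_eq]
      intro S hne hneq
      have hweq : (fun u v => if G.Adj u v ∧ X s(u, v) ω = true then 1 / min 1 q else 0)
          = gWeight G := by
        funext u v
        rw [gWeight]
        by_cases hA : G.Adj u v
        · have he : s(u, v) ∈ G.edgeFinset :=
            SimpleGraph.mem_edgeFinset.mpr ((G.mem_edgeSet).mpr hA)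
          have hXe : X s(u, v) ω = true := by
            have := Set.mem_iInter₂.mp hω s(u, v) he
            exact this
          rw [if_pos ⟨hA, hXe⟩, if_pos hA, hminq]
          norm_num
        · rw [if_neg (fun h => hA h.1), if_neg hA]
      rw [hweq]
      have h0 := cutVal_gWeight_nonneg G S
      constructor <;> nlinarith
    have hTc : μ Tᶜ = 0 := by
      have : Tᶜ = ⋃ e ∈ G.edgeFinset, {ω | X e ω = true}ᶜ := by
        rw [hT, Set.compl_iInter₂]
      rw [this]
      refine le_antisymm ?_ zero_le
      refine (measure_biUnion_finset_le G.edgeFinset _).trans ?_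
      have : ∀ e ∈ G.edgeFinset, μ ({ω | X e ω = true}ᶜ) = 0 := by
        intro e he
        have hset : MeasurableSet {ω | X e ω = true} :=
          (hXmeas e) (measurableSet_singleton true)
        rw [MeasureTheory.prob_compl_eq_one_sub hset, hXprob e he, hminq,
          ENNReal.ofReal_one, tsub_self]
      rw [Finset.sum_congr rfl this]
      simp
    have h1 : (1:ENNReal) ≤ μ good := by
      have huniv : (Set.univ : Set Ω) ⊆ good ∪ Tᶜ := by
        intro ω _
        by_cases h : ω ∈ T
        · exact Or.inl (hTsub h)
        · exact Or.inr h
      calc (1:ENNReal) = μ Set.univ := (measure_univ).symm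
        _ ≤ μ (good ∪ Tᶜ) := measure_mono huniv
        _ ≤ μ good + μ Tᶜ := measure_union_le _ _
        _ = μ good := by rw [hTc, add_zero]
    refine le_trans ?_ h1
    exact ENNReal.ofReal_le_one.mpr (by linarith)
  · -- p = q < 1 : Chernoff + cut counting
    push_neg at hcase
    have hminq : min 1 q = q := min_eq_right hcase.le
    -- the cross-edge set of a cut
    set ES : Finset V → Finset (Sym2 V) := fun S =>
      ((S ×ˢ Sᶜ).filter fun z => G.Adj z.1 z.2).image fun z => s(z.1, z.2) with hESdef
    have hinj : ∀ S : Finset V, ∀ z1 ∈ (S ×ˢ Sᶜ).filter (fun z => G.Adj z.1 z.2),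
        ∀ z2 ∈ (S ×ˢ Sᶜ).filter (fun z => G.Adj z.1 z.2),
        s(z1.1, z1.2) = s(z2.1, z2.2) → z1 = z2 := by
      intro S z1 h1 z2 h2 he
      rw [Finset.mem_filter, Finset.mem_product] at h1 h2
      rcases Sym2.eq_iff.mp he with ⟨ha, hb⟩ | ⟨ha, hb⟩
      · exact Prod.ext ha hb
      · exfalso
        have : z1.1 ∈ Sᶜ := ha ▸ h2.1.2
        rw [Finset.mem_compl] at this
        exact this h1.1.1
    have hEScard : ∀ S : Finset V, (ES S).card = cutValN G S := by
      intro S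
      rw [hESdef]
      rw [Finset.card_image_of_injOn (fun z1 h1 z2 h2 he => hinj S z1 h1 z2 h2 he)]
      rw [cutValN, Finset.card_filter]
      rw [← Finset.sum_product']
    have hESmem : ∀ S : Finset V, ∀ e ∈ ES S, e ∈ G.edgeFinset := by
      intro S e he
      rw [hESdef] at he
      obtain ⟨z, hz, rfl⟩ := Finset.mem_image.mp he
      rw [Finset.mem_filter] at hz
      exact SimpleGraph.mem_edgeFinset.mpr ((G.mem_edgeSet).mpr hz.2)
    set Z : Finset V → Ω → ℝ := fun S ω => ∑ e ∈ ES S, (if X e ω then (1:ℝ) else 0)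
      with hZdef
    have hcv : ∀ S : Finset V, ∀ ω : Ω,
        cutVal (fun u v => if G.Adj u v ∧ X s(u, v) ω = true then 1 / min 1 q else 0) S
          = (1/q) * Z S ω := by
      intro S ω
      rw [cutVal, ← Finset.sum_product']
      have e1 : ∀ z : V × V,
          (if G.Adj z.1 z.2 ∧ X s(z.1, z.2) ω = true then 1 / min 1 q else 0)
            = (if G.Adj z.1 z.2 then (if X s(z.1, z.2) ω then (1:ℝ)/q else 0) else 0) := by
        intro z
        rw [hminq, ite_and]
      rw [Finset.sum_congr rfl fun z _ => e1 z, ← Finset.sum_filter]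
      rw [← Finset.sum_image (f := fun e => if X e ω then (1:ℝ)/q else 0)
        (fun z1 h1 z2 h2 he => hinj S z1 h1 z2 h2 he)]
      show (∑ e ∈ ES S, if X e ω = true then (1:ℝ)/q else 0)
          = 1/q * ∑ e ∈ ES S, (if X e ω = true then (1:ℝ) else 0)
      rw [Finset.mul_sum]
      refine Finset.sum_congr rfl fun e _ => ?_
      split <;> norm_num
    -- bad events
    set badset : Finset V → Set Ω := fun S =>
      {ω | Z S ω ≤ (1-ε)*(q*((ES S).card : ℝ))}
        ∪ {ω | (1+ε)*(q*((ES S).card : ℝ)) ≤ Z S ω} with hbaddef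
    have hbadm : ∀ S : Finset V, μ (badset S)
        ≤ ENNReal.ofReal (2 * Real.exp (-(ε^2*(q*((ES S).card : ℝ))/4))) := by
      intro S
      refine (measure_union_le _ _).trans ?_
      exact bern_tails μ X hXmeas hXind (ES S) hq0 hcase.le
        (fun e he => by rw [hXprob e (hESmem S e he), hminq]) hε0 hε1
    -- the collection of cuts
    set 𝒜 : Finset (Finset V) := Finset.univ.filter
      (fun S => S.Nonempty ∧ S ≠ Finset.univ) with hAdef
    have hgoodsub : (Set.univ : Set Ω) ⊆ good ∪ ⋃ S ∈ 𝒜, badset S := by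
      intro ω _
      by_cases hb : ω ∈ ⋃ S ∈ 𝒜, badset S
      · exact Or.inr hb
      · refine Or.inl ?_
        rw [hgood, Set.mem_setOf_eq]
        intro S hne hneq
        have hSA : S ∈ 𝒜 := by
          rw [hAdef, Finset.mem_filter]
          exact ⟨Finset.mem_univ S, hne, hneq⟩
        have hnb : ω ∉ badset S := fun h => hb (Set.mem_biUnion hSA h)
        rw [hbaddef, Set.mem_union, Set.mem_setOf_eq, Set.mem_setOf_eq] at hnb
        push_neg at hnb
        obtain ⟨hlo, hup⟩ := hnb
        rw [hcv S ω, cutVal_gWeight_cast, ← hEScard S]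
        have hq0' : (0:ℝ) < 1/q := by positivity
        constructor
        · have : (1-ε)*((ES S).card : ℝ) = (1/q)*((1-ε)*(q*((ES S).card : ℝ))) := by
            field_simp
          rw [this]
          exact mul_le_mul_of_nonneg_left hlo.le hq0'.le
        · have : (1+ε)*((ES S).card : ℝ) = (1/q)*((1+ε)*(q*((ES S).card : ℝ))) := by
            field_simp
          rw [this]
          exact mul_le_mul_of_nonneg_left hup.le hq0'.le
    -- union bound and counting
    have hsumbound : ∑ S ∈ 𝒜, (2 * Real.exp (-(ε^2*(q*((ES S).card : ℝ))/4)))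
        ≤ (n:ℝ) ^ (-d) := by
      -- rewrite exponent
      have hterm : ∀ S ∈ 𝒜, 2 * Real.exp (-(ε^2*(q*((ES S).card : ℝ))/4))
          = 2 * Real.exp (-(c*L*((cutValN G S : ℝ))/(4*k))) := by
        intro S _
        congr 2
        rw [hEScard S, hqdef]
        have hek : ε^2*k ≠ 0 := by positivity
        field_simp
      rw [Finset.sum_congr rfl hterm]
      -- fiber decomposition over j = ceil(m/k)
      set jf : Finset V → ℕ := fun S => (cutValN G S + k - 1)/k with hjf
      have hmaps : ∀ S ∈ 𝒜, jf S ∈ Finset.Icc 1 (n*n) := by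
        intro S hS
        rw [hAdef, Finset.mem_filter] at hS
        have hm1 : k ≤ cutValN G S := hmin S hS.2.1 hS.2.2
        have hm2 : cutValN G S ≤ n*n := cutValN_le_sq G S
        rw [Finset.mem_Icc, hjf]
        constructor
        · rw [Nat.one_le_div_iff (by omega)]
          omega
        · have hnk : n*n ≤ n*n*k := Nat.le_mul_of_pos_right _ (by omega)
          have hlt : cutValN G S + k - 1 < (n*n+1)*k := by
            have : (n*n+1)*k = n*n*k + k := by ring
            omega
          have := (Nat.div_lt_iff_lt_mul (k := k) (by omega)).mpr hlt
          show (cutValN G S + k - 1)/k ≤ n*n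
          omega
      rw [← Finset.sum_fiberwise_of_maps_to hmaps]
      -- bound each fiber
      have hfiber : ∀ j ∈ Finset.Icc 1 (n*n),
          ∑ S ∈ 𝒜.filter (fun S => jf S = j),
              2 * Real.exp (-(c*L*((cutValN G S : ℝ))/(4*k)))
            ≤ (n:ℝ)^(4*j) * (2 * Real.exp (-(c*L*j/8))) := by
        intro j hj
        rw [Finset.mem_Icc] at hj
        have hcount : (𝒜.filter (fun S => jf S = j)).card ≤ n^(4*j) := by
          have hsub : 𝒜.filter (fun S => jf S = j) ⊆
              (Finset.univ : Finset (Finset V)).filter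
                (fun S => S.Nonempty ∧ S ≠ Finset.univ ∧
                  (∑ u ∈ S, ∑ v ∈ Sᶜ, (if G.Adj u v then 1 else 0)) ≤ j * k) := by
            intro S hS
            rw [Finset.mem_filter] at hS
            obtain ⟨hS𝒜, hjS⟩ := hS
            rw [hAdef, Finset.mem_filter] at hS𝒜
            rw [Finset.mem_filter]
            refine ⟨Finset.mem_univ S, hS𝒜.2.1, hS𝒜.2.2, ?_⟩
            -- m ≤ j*k
            have hdm := Nat.div_add_mod (cutValN G S + k - 1) k
            have hmod : (cutValN G S + k - 1) % k < k := Nat.mod_lt _ (by omega)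
            have hm1 : k ≤ cutValN G S := hmin S hS𝒜.2.1 hS𝒜.2.2
            rw [hjf] at hjS
            rw [← hjS]
            show cutValN G S ≤ (cutValN G S + k - 1)/k * k
            set D := (cutValN G S + k - 1)/k with hD
            set P := k * D with hP
            rw [mul_comm]
            omega
          refine (Finset.card_le_card hsub).trans ?_
          exact count_graph G k j hk hj.1 hn (fun S hne hneq => hmin S hne hneq)
        have htermb : ∀ S ∈ 𝒜.filter (fun S => jf S = j),
            2 * Real.exp (-(c*L*((cutValN G S : ℝ))/(4*k)))
              ≤ 2 * Real.exp (-(c*L*j/8)) := by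
          intro S hS
          rw [Finset.mem_filter] at hS
          obtain ⟨hS𝒜, hjS⟩ := hS
          rw [hAdef, Finset.mem_filter] at hS𝒜
          have hm1 : k ≤ cutValN G S := hmin S hS𝒜.2.1 hS𝒜.2.2
          -- j*k ≤ 2*m
          have hjk2m : j * k ≤ 2 * cutValN G S := by
            rw [← hjS, hjf]
            have hdm := Nat.div_add_mod (cutValN G S + k - 1) k
            have hle : (cutValN G S + k - 1)/k * k ≤ cutValN G S + k - 1 :=
              Nat.div_mul_le_self _ _
            set D := (cutValN G S + k - 1)/k with hD
            set P := D * k with hP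
            omega
          have hjk2m' : (j:ℝ) * k ≤ 2 * (cutValN G S : ℝ) := by exact_mod_cast hjk2m
          have hexp : c*L*(j:ℝ)/8 ≤ c*L*((cutValN G S : ℝ))/(4*k) := by
            rw [div_le_div_iff₀ (by norm_num) (by positivity)]
            have hcL : (0:ℝ) < c*L := by positivity
            nlinarith
          have := Real.exp_le_exp.mpr (neg_le_neg hexp)
          linarith
        calc ∑ S ∈ 𝒜.filter (fun S => jf S = j),
              2 * Real.exp (-(c*L*((cutValN G S : ℝ))/(4*k)))
            ≤ ∑ _S ∈ 𝒜.filter (fun S => jf S = j), 2 * Real.exp (-(c*L*j/8)) :=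
              Finset.sum_le_sum htermb
          _ = ((𝒜.filter (fun S => jf S = j)).card : ℝ) * (2 * Real.exp (-(c*L*j/8))) := by
              rw [Finset.sum_const, nsmul_eq_mul]
          _ ≤ (n:ℝ)^(4*j) * (2 * Real.exp (-(c*L*j/8))) := by
              refine mul_le_mul_of_nonneg_right ?_ (by positivity)
              exact_mod_cast hcount
      refine (Finset.sum_le_sum hfiber).trans ?_
      -- geometric-type bound
      have hsingle : ∀ j ∈ Finset.Icc 1 (n*n),
          (n:ℝ)^(4*j) * (2 * Real.exp (-(c*L*j/8)))
            ≤ 2 * Real.exp (-(L*(d+3))) := by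
        intro j hj
        rw [Finset.mem_Icc] at hj
        have hj1 : (1:ℝ) ≤ j := by exact_mod_cast hj.1
        have hnp : (n:ℝ)^(4*j) = Real.exp ((4*j : ℕ) * L) := by
          rw [← Real.exp_log (pow_pos hn0 (4*j)), Real.log_pow]
        have harg : ((4*j : ℕ) : ℝ) * L + (-(c*L*j/8)) ≤ -(L*(d+3)) := by
          push_cast
          have hc8 : c/8 = d + 7 := by rw [hcdef]; ring
          rw [show ((4:ℝ)*(j:ℝ)) * L + (-(c*L*(j:ℝ)/8)) = -((j:ℝ))*L*(c/8-4) by ring, hc8]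
          have h1 : (j:ℝ)*L*(d+3) ≥ L*(d+3) := by
            nlinarith [mul_nonneg (mul_nonneg (sub_nonneg.mpr hj1) hL0.le)
              (show (0:ℝ) ≤ d+3 by linarith)]
          nlinarith
        calc (n:ℝ)^(4*j) * (2 * Real.exp (-(c*L*j/8)))
            = 2 * Real.exp (((4*j : ℕ) : ℝ) * L + (-(c*L*j/8))) := by
              rw [hnp, Real.exp_add]; ring
          _ ≤ 2 * Real.exp (-(L*(d+3))) := by
              have := Real.exp_le_exp.mpr harg
              linarith
      refine (Finset.sum_le_sum hsingle).trans ?_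
      rw [Finset.sum_const, nsmul_eq_mul, Nat.card_Icc]
      have hcard : ((n*n + 1 - 1 : ℕ) : ℝ) = (n:ℝ)*(n:ℝ) := by push_cast; ring
      rw [hcard]
      -- n² · 2 exp(−L(d+3)) ≤ exp(−Ld) = n^{-d}
      have hexpn : Real.exp L = n := Real.exp_log hn0
      have hnn : (n:ℝ)*(n:ℝ) = Real.exp (2*L) := by
        rw [show (2:ℝ)*L = L + L by ring, Real.exp_add, hexpn]
      have hrw : (n:ℝ)*(n:ℝ) * (2*Real.exp (-(L*(d+3)))) = 2 * Real.exp (-(L*(d+1))) := by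
        rw [hnn, show Real.exp (2*L) * (2 * Real.exp (-(L*(d+3))))
          = 2 * (Real.exp (2*L) * Real.exp (-(L*(d+3)))) from by ring, ← Real.exp_add]
        congr 2
        ring
      rw [hrw]
      have hnd : (n:ℝ)^(-d) = Real.exp (-(L*d)) := by
        rw [Real.rpow_def_of_pos hn0, hLdef]
        congr 1
        ring
      rw [hnd]
      have h2n : (2:ℝ) ≤ Real.exp L := by rw [hexpn]; exact_mod_cast hn
      have : Real.exp (-(L*(d+1))) * 2 ≤ Real.exp (-(L*(d+1))) * Real.exp L := by
        exact mul_le_mul_of_nonneg_left h2n (Real.exp_pos _).le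
      rw [← Real.exp_add] at this
      calc 2 * Real.exp (-(L*(d+1))) = Real.exp (-(L*(d+1))) * 2 := by ring
        _ ≤ Real.exp (-(L*(d+1)) + L) := this
        _ ≤ Real.exp (-(L*d)) := by
            rw [Real.exp_le_exp]
            nlinarith
    -- put everything together
    have hbadtot : μ (⋃ S ∈ 𝒜, badset S) ≤ ENNReal.ofReal ((n:ℝ)^(-d)) := by
      refine (measure_biUnion_finset_le 𝒜 badset).trans ?_
      calc ∑ S ∈ 𝒜, μ (badset S)
          ≤ ∑ S ∈ 𝒜, ENNReal.ofReal (2 * Real.exp (-(ε^2*(q*((ES S).card : ℝ))/4))) :=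
            Finset.sum_le_sum fun S _ => hbadm S
        _ = ENNReal.ofReal (∑ S ∈ 𝒜, 2 * Real.exp (-(ε^2*(q*((ES S).card : ℝ))/4))) :=
            (ENNReal.ofReal_sum_of_nonneg fun S _ => by positivity).symm
        _ ≤ ENNReal.ofReal ((n:ℝ)^(-d)) := ENNReal.ofReal_le_ofReal hsumbound
    have h1 : (1:ENNReal) ≤ μ good + ENNReal.ofReal ((n:ℝ)^(-d)) := by
      calc (1:ENNReal) = μ Set.univ := (measure_univ).symm
        _ ≤ μ (good ∪ ⋃ S ∈ 𝒜, badset S) := measure_mono hgoodsub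
        _ ≤ μ good + μ (⋃ S ∈ 𝒜, badset S) := measure_union_le _ _
        _ ≤ μ good + ENNReal.ofReal ((n:ℝ)^(-d)) := add_le_add_right hbadtot _
    have heq : ENNReal.ofReal (1 - (n:ℝ)^(-d)) + ENNReal.ofReal ((n:ℝ)^(-d)) = 1 := by
      rw [← ENNReal.ofReal_add (by linarith) hnd0, sub_add_cancel, ENNReal.ofReal_one]
    rw [← heq] at h1
    exact (ENNReal.add_le_add_iff_right ENNReal.ofReal_ne_top).mp h1
end

section
/- Let G = (V, E) be an undirected graph on n ≥ 2 vertices in which every edge is k-weak. Then V can be partitioned into t = ⌈log₂ n⌉ (possibly empty) sets W_1, …, W_t such that for every i ∈ {1, …, t} and every v ∈ W_i, the degree of v in the subgraph of G induced by W_i ∪ W_{i+1} ∪ ⋯ ∪ W_t is at most 4k. -/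
open Finset

variable {V : Type} [Fintype V] [DecidableEq V]

section Aux

variable (G : SimpleGraph V) [DecidableRel G.Adj]

def degOn (v : V) (U : Finset V) : ℕ := ∑ u ∈ U, if G.Adj v u then 1 else 0

def eSum (U : Finset V) : ℕ := ∑ v ∈ U, degOn G v U

lemma degOn_eq_card (v : V) (U : Finset V) :
    degOn G v U = (U.filter (G.Adj v)).card := by
  simp [degOn]

lemma degOn_mono (v : V) {U U' : Finset V} (h : U ⊆ U') : degOn G v U ≤ degOn G v U' := by
  rw [degOn_eq_card, degOn_eq_card]
  exact card_le_card (filter_subset_filter _ h)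

lemma eSum_split {T U : Finset V} (hT : T ⊆ U) :
    eSum G U = eSum G T + eSum G (U \ T) + 2 * cutValOn G U T := by
  have hU : U = T ∪ (U \ T) := (Finset.union_sdiff_of_subset hT).symm
  have hdisj : Disjoint T (U \ T) := Finset.disjoint_sdiff
  have hsub : U \ T ⊆ U := sdiff_subset
  unfold eSum degOn cutValOn
  nth_rewrite 1 [hU]
  rw [Finset.sum_union hdisj]
  have h1 : ∀ v ∈ T, (∑ u ∈ U, if G.Adj v u then 1 else 0)
      = (∑ u ∈ T, if G.Adj v u then 1 else 0) + ∑ u ∈ U \ T, if G.Adj v u then 1 else 0 := by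
    intro v _
    nth_rewrite 1 [hU]
    rw [Finset.sum_union hdisj]
  have h2 : ∀ v ∈ U \ T, (∑ u ∈ U, if G.Adj v u then 1 else 0)
      = (∑ u ∈ T, if G.Adj v u then 1 else 0) + ∑ u ∈ U \ T, if G.Adj v u then 1 else 0 := by
    intro v _
    nth_rewrite 1 [hU]
    rw [Finset.sum_union hdisj]
  rw [Finset.sum_congr rfl h1, Finset.sum_congr rfl h2, Finset.sum_add_distrib,
    Finset.sum_add_distrib]
  have hcomm : (∑ v ∈ U \ T, ∑ u ∈ T, if G.Adj v u then 1 else 0)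
      = ∑ u ∈ T, ∑ v ∈ U \ T, if G.Adj u v then 1 else 0 := by
    rw [Finset.sum_comm]
    apply Finset.sum_congr rfl
    intro u _
    apply Finset.sum_congr rfl
    intro v _
    simp [G.adj_comm]
  rw [hcomm]
  ring

set_option linter.unusedSectionVars false

lemma cutValOn_le (U T : Finset V) : cutValOn G U T ≤ Fintype.card V * Fintype.card V := by
  unfold cutValOn
  calc (∑ u ∈ T, ∑ v ∈ U \ T, if G.Adj u v then 1 else 0)
      ≤ ∑ u ∈ T, ∑ v ∈ U \ T, 1 := by
        apply Finset.sum_le_sum; intro u _; apply Finset.sum_le_sum; intro v _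
        split <;> omega
    _ = T.card * (U \ T).card := by simp [mul_comm]
    _ ≤ Fintype.card V * Fintype.card V :=
        Nat.mul_le_mul (card_le_card (subset_univ _) |>.trans_eq (card_univ))
          (card_le_card (subset_univ _) |>.trans_eq (card_univ))

lemma strongConn_ge {u v : V} (h : G.Adj u v) {k : ℕ} {U : Finset V}
    (hu : u ∈ U) (hv : v ∈ U) (hK : KConnOn G k U) : k ≤ strongConn G s(u,v) := by
  apply le_csSup
  · refine ⟨Fintype.card V * Fintype.card V, ?_⟩
    rintro k' ⟨U', hU', hK'⟩
    have hu' : u ∈ U' := hU' u (by simp)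
    have hv' : v ∈ U' := hU' v (by simp)
    have hne : u ≠ v := G.ne_of_adj h
    have := hK' {u} (by simpa using hu') ⟨u, by simp⟩ (by
      intro hEq
      rw [← hEq] at hv'
      simp at hv'
      exact hne hv'.symm)
    exact this.trans (cutValOn_le G U' {u})
  · exact ⟨U, by intro x hx; rw [Sym2.mem_iff] at hx; rcases hx with rfl | rfl <;> assumption, hK⟩

lemma eSum_le (k : ℕ) (hweak : ∀ e ∈ G.edgeFinset, strongConn G e < k) :
    ∀ n (U : Finset V), U.card ≤ n → eSum G U ≤ 2 * k * (U.card - 1) := by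
  intro n
  induction n with
  | zero =>
    intro U hU
    rw [Nat.le_zero, Finset.card_eq_zero] at hU
    simp [hU, eSum]
  | succ n ih =>
    intro U hU
    by_cases hedge : ∀ u ∈ U, ∀ v ∈ U, ¬ G.Adj u v
    · have : eSum G U = 0 := by
        unfold eSum degOn
        apply Finset.sum_eq_zero
        intro v hv
        apply Finset.sum_eq_zero
        intro u hu
        simp [hedge v hv u hu]
      omega
    · push_neg at hedge
      obtain ⟨u, hu, v, hv, hadj⟩ := hedge
      by_cases hK : KConnOn G k U
      · exfalso
        have h1 : k ≤ strongConn G s(u,v) := strongConn_ge G hadj hu hv hK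
        have h2 : strongConn G s(u,v) < k := hweak _ (by
          rw [SimpleGraph.mem_edgeFinset, SimpleGraph.mem_edgeSet]; exact hadj)
        omega
      · unfold KConnOn at hK
        push_neg at hK
        obtain ⟨T, hTU, hTne, hTne', hcut⟩ := hK
        have hssub : T ⊂ U := ssubset_of_subset_of_ne hTU hTne'
        have hTcard : 1 ≤ T.card := Finset.card_pos.mpr hTne
        have hTlt : T.card < U.card := Finset.card_lt_card hssub
        have hScard : (U \ T).card = U.card - T.card := Finset.card_sdiff_of_subset hTU
        have hSpos : 1 ≤ (U \ T).card := by omega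
        have ih1 := ih T (by omega)
        have ih2 := ih (U \ T) (by omega)
        rw [eSum_split G hTU]
        obtain ⟨a, ha⟩ := Nat.exists_eq_add_of_le hTcard
        obtain ⟨b, hb⟩ := Nat.exists_eq_add_of_le hSpos
        have hUcard : U.card = a + b + 2 := by omega
        rw [ha] at ih1
        rw [hb] at ih2
        rw [hUcard]
        have e1 : 1 + a - 1 = a := by omega
        have e2 : 1 + b - 1 = b := by omega
        have e3 : a + b + 2 - 1 = a + b + 1 := by omega
        rw [e1] at ih1; rw [e2] at ih2; rw [e3]
        have : 2 * cutValOn G U T ≤ 2 * k := by omega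
        calc eSum G T + eSum G (U \ T) + 2 * cutValOn G U T
            ≤ 2 * k * a + 2 * k * b + 2 * k := by omega
          _ = 2 * k * (a + b + 1) := by ring

variable (k : ℕ)

def Rset : ℕ → Finset V
  | 0 => univ
  | i+1 => (Rset i).filter (fun v => 4*k < degOn G v (Rset i))

def Wset (i : ℕ) : Finset V := (Rset G k i).filter (fun v => degOn G v (Rset G k i) ≤ 4*k)

lemma Rset_succ_subset (i : ℕ) : Rset G k (i+1) ⊆ Rset G k i := by
  rw [Rset]; exact filter_subset _ _

lemma Rset_anti {i j : ℕ} (h : i ≤ j) : Rset G k j ⊆ Rset G k i := by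
  induction j with
  | zero => simp_all
  | succ j ih =>
    rcases Nat.lt_or_ge i (j+1) with hlt | hge
    · exact (Rset_succ_subset G k j).trans (ih (by omega))
    · have : i = j + 1 := by omega
      subst this; rfl

lemma Wset_subset (i : ℕ) : Wset G k i ⊆ Rset G k i := filter_subset _ _

lemma mem_Wset_or (i : ℕ) {v : V} (hv : v ∈ Rset G k i) :
    v ∈ Wset G k i ∨ v ∈ Rset G k (i+1) := by
  by_cases h : degOn G v (Rset G k i) ≤ 4*k
  · left; exact mem_filter.mpr ⟨hv, h⟩
  · right; rw [Rset]; exact mem_filter.mpr ⟨hv, by omega⟩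

lemma not_mem_both (i : ℕ) {v : V} (hv : v ∈ Wset G k i) : v ∉ Rset G k (i+1) := by
  rw [Wset, mem_filter] at hv
  rw [Rset, mem_filter]
  push_neg
  intro _
  omega

lemma Rset_halve (hweak : ∀ e ∈ G.edgeFinset, strongConn G e < k) (i : ℕ)
    (hpos : 1 ≤ (Rset G k i).card) :
    2 * (Rset G k (i+1)).card + 1 ≤ (Rset G k i).card := by
  set U := Rset G k i with hUdef
  set C := Rset G k (i+1) with hCdef
  have hCU : C ⊆ U := Rset_succ_subset G k i
  have hdeg : ∀ v ∈ C, 4*k + 1 ≤ degOn G v U := by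
    intro v hv
    rw [hCdef, Rset, mem_filter, ← hUdef] at hv
    omega
  have hsum1 : (4*k+1) * C.card ≤ ∑ v ∈ C, degOn G v U := by
    calc (4*k+1) * C.card = ∑ _v ∈ C, (4*k+1) := by simp [mul_comm]
      _ ≤ ∑ v ∈ C, degOn G v U := Finset.sum_le_sum hdeg
  have hsum2 : (∑ v ∈ C, degOn G v U) ≤ eSum G U := by
    unfold eSum
    apply Finset.sum_le_sum_of_subset hCU
  have hE : eSum G U ≤ 2 * k * (U.card - 1) := eSum_le G k hweak U.card U le_rfl
  obtain ⟨m, hm⟩ := Nat.exists_eq_add_of_le hpos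
  rw [hm] at hE ⊢
  have hE' : (4*k+1) * C.card ≤ 2 * k * m := by
    calc (4*k+1) * C.card ≤ eSum G U := hsum1.trans hsum2
      _ ≤ 2 * k * (1 + m - 1) := hE
      _ = 2 * k * m := by congr 1; omega
  by_contra hcon
  push_neg at hcon
  have h2c : 1 + m ≤ 2 * C.card := by omega
  nlinarith

lemma Rset_card (hn : 2 ≤ Fintype.card V) (hweak : ∀ e ∈ G.edgeFinset, strongConn G e < k) :
    ∀ i : ℕ, Rset G k i = ∅ ∨ 2^i * ((Rset G k i).card + 1) ≤ Fintype.card V + 1 := by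
  intro i
  induction i with
  | zero => right; simp [Rset, card_univ]
  | succ i ih =>
    rcases ih with h | h
    · left
      rw [Rset, h]
      simp
    · by_cases hpos : 1 ≤ (Rset G k i).card
      · right
        have := Rset_halve G k hweak i hpos
        calc 2^(i+1) * ((Rset G k (i+1)).card + 1)
            = 2^i * (2 * (Rset G k (i+1)).card + 2) := by ring
          _ ≤ 2^i * ((Rset G k i).card + 1) := by
              apply Nat.mul_le_mul_left
              omega
          _ ≤ Fintype.card V + 1 := h
      · left
        have : Rset G k i = ∅ := by
          rw [← Finset.card_eq_zero]; omega
        rw [Rset, this]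
        simp

lemma Rset_empty (hn : 2 ≤ Fintype.card V) (hweak : ∀ e ∈ G.edgeFinset, strongConn G e < k) :
    Rset G k (Nat.clog 2 (Fintype.card V)) = ∅ := by
  set t := Nat.clog 2 (Fintype.card V) with ht
  have hle : Fintype.card V ≤ 2 ^ t := Nat.le_pow_clog (by norm_num) _
  rcases Rset_card G k hn hweak t with h | h
  · exact h
  · rw [← Finset.card_eq_zero]
    by_contra hne
    have h1 : 1 ≤ (Rset G k t).card := by omega
    have : 2^t * 2 ≤ Fintype.card V + 1 := by
      calc 2^t * 2 ≤ 2^t * ((Rset G k t).card + 1) := by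
            apply Nat.mul_le_mul_left; omega
        _ ≤ Fintype.card V + 1 := h
    have h2 : 1 ≤ 2^t := Nat.one_le_two_pow
    omega

end Aux

lemma Wset_unique (G : SimpleGraph V) [DecidableRel G.Adj] (k : ℕ) {i j : ℕ} {v : V}
    (hij : i < j) (hi : v ∈ Wset G k i) (hj : v ∈ Wset G k j) : False := by
  have h1 : v ∈ Rset G k j := Wset_subset G k j hj
  have h2 : v ∈ Rset G k (i+1) := Rset_anti G k (by omega) h1
  exact not_mem_both G k i hi h2


/-- If every edge of a graph `G` on `n ≥ 2` vertices is `k`-weak, then the vertex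
set can be partitioned into `t = ⌈log₂ n⌉` (possibly empty) sets `W 0, …, W (t-1)`
such that every `v ∈ W i` has degree at most `4k` in the subgraph induced by
`W i ∪ W (i+1) ∪ ⋯ ∪ W (t-1)`. -/
theorem stmt6 (V : Type) [Fintype V] [DecidableEq V] (G : SimpleGraph V) [DecidableRel G.Adj]
    (hn : 2 ≤ Fintype.card V) (k : ℕ)
    (hweak : ∀ e ∈ G.edgeFinset, strongConn G e < k) :
    ∃ W : Fin (Nat.clog 2 (Fintype.card V)) → Finset V,
      (∀ v : V, ∃! i, v ∈ W i) ∧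
      ∀ i, ∀ v ∈ W i,
        (Finset.univ.filter (fun u => G.Adj v u ∧ ∃ j, i ≤ j ∧ u ∈ W j)).card ≤ 4 * k := by
  set t := Nat.clog 2 (Fintype.card V) with ht
  have htpos : 0 < t := Nat.clog_pos (by norm_num) (by omega)
  have hempty : Rset G k t = ∅ := Rset_empty G k hn hweak
  refine ⟨fun i => Wset G k i.val, ?_, ?_⟩
  · intro v
    have hP : v ∉ Rset G k t := by rw [hempty]; exact notMem_empty v
    have hex : ∃ j, v ∉ Rset G k j := ⟨t, hP⟩
    classical
    obtain ⟨j, hjspec, hjmin⟩ : ∃ j, (v ∉ Rset G k j) ∧ ∀ m, m < j → v ∈ Rset G k m :=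
      ⟨Nat.find hex, Nat.find_spec hex, fun m hm => not_not.mp (Nat.find_min hex hm)⟩
    have hjle : j ≤ t := by
      by_contra hc
      exact hP (hjmin t (by omega))
    have hjpos : 0 < j := by
      rcases Nat.eq_zero_or_pos j with h | h
      · exfalso; apply hjspec; rw [h]; simp [Rset]
      · exact h
    have hmem : v ∈ Rset G k (j-1) := hjmin (j-1) (by omega)
    have hW : v ∈ Wset G k (j-1) := by
      rcases mem_Wset_or G k (j-1) hmem with h | h
      · exact h
      · exfalso; apply hjspec
        have : j - 1 + 1 = j := by omega
        rwa [this] at h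
    refine ⟨⟨j-1, by omega⟩, hW, ?_⟩
    rintro ⟨i, hi⟩ hiW
    have : i = j - 1 := by
      rcases Nat.lt_trichotomy i (j-1) with hlt | heq | hgt
      · exact absurd hiW (fun h => Wset_unique G k hlt h hW)
      · exact heq
      · exact absurd hiW (fun h => Wset_unique G k hgt hW h)
    simp [this]
  · rintro ⟨i, hi⟩ v hv
    have hvdeg : degOn G v (Rset G k i) ≤ 4*k := (mem_filter.mp hv).2
    calc (Finset.univ.filter (fun u => G.Adj v u ∧
            ∃ j : Fin t, (⟨i, hi⟩ : Fin t) ≤ j ∧ u ∈ Wset G k j.val)).card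
        ≤ ((Rset G k i).filter (G.Adj v)).card := by
          apply card_le_card
          intro u hu
          rw [mem_filter] at hu
          obtain ⟨-, hadj, ⟨jv, hjv⟩, hij, hu⟩ := hu
          rw [mem_filter]
          refine ⟨?_, hadj⟩
          have : u ∈ Rset G k jv := Wset_subset G k jv hu
          exact Rset_anti G k (by exact_mod_cast hij) this
      _ = degOn G v (Rset G k i) := (degOn_eq_card G v _).symm
      _ ≤ 4 * k := hvdeg
end

section
/- Let X_1, …, X_n be mutually independent random variables where, for each i, X_i takes the value 1/p_i with probability p_i and the value 0 otherwise, for some p_i ∈ (0, 1]. Let p ∈ (0, 1] satisfy p ≤ p_i for every i, let ε ∈ (0, 1), and let N ≥ n. Then Pr[|Σ_{i=1}^n X_i − n| > εN] < 2 e^{−0.38 ε² p N}. -/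
open MeasureTheory ProbabilityTheory

lemma myExpQuartic {r : ℝ} (h : |r| ≤ 1) :
    Real.exp r ≤ 1 + r + r ^ 2 / 2 + r ^ 3 / 6 + 5 * r ^ 4 / 96 := by
  have hb := Real.exp_bound h (by norm_num : 0 < 4)
  have h4 : |r| ^ 4 = r ^ 4 := by
    rw [← abs_pow]; exact abs_of_nonneg (by positivity)
  rw [h4, abs_le] at hb
  have hb2 := hb.2
  norm_num [Finset.sum_range_succ, Nat.factorial] at hb2
  nlinarith [hb2]

lemma myExpNeg {x : ℝ} (h0 : 0 ≤ x) (h1 : x ≤ 1) :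
    Real.exp (-x) ≤ 1 - x + x ^ 2 / 2 := by
  have h := myExpQuartic (r := -x) (by rw [abs_le]; constructor <;> linarith)
  nlinarith [pow_nonneg h0 3, pow_nonneg h0 4, h]

lemma myLogBound {x : ℝ} (h0 : 0 < x) (h1 : x ≤ 1) :
    x + 0.38 * x ^ 2 ≤ (1 + x) * Real.log (1 + x) := by
  have hx1 : (0:ℝ) < 1 + x := by linarith
  obtain ⟨u, hu⟩ : ∃ u : ℝ, u = x + 0.38 * x ^ 2 := ⟨_, rfl⟩
  obtain ⟨r, hr⟩ : ∃ r : ℝ, r = u / (1 + x) := ⟨_, rfl⟩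
  have hu0 : 0 ≤ u := by rw [hu]; nlinarith
  have hr0 : 0 ≤ r := by rw [hr]; positivity
  have hr1 : r ≤ 1 := by
    rw [hr, div_le_one hx1, hu]; nlinarith
  have hexp : Real.exp r ≤ 1 + r + r ^ 2 / 2 + r ^ 3 / 6 + 5 * r ^ 4 / 96 :=
    myExpQuartic (by rw [abs_of_nonneg hr0]; exact hr1)
  have hcert : 96 * (1+x)^4 + 96 * u * (1+x)^3 + 48 * u^2 * (1+x)^2
      + 16 * u^3 * (1+x) + 5 * u^4 ≤ 96 * (1+x)^5 := by
    have hxx : 0 ≤ 1 - x := by linarith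
    have e2 : 0 ≤ x^2 * (1-x)^6 := by positivity
    have e3 : 0 ≤ x^3 * (1-x)^5 := mul_nonneg (by positivity) (pow_nonneg hxx 5)
    have e4 : 0 ≤ x^4 * (1-x)^4 := by positivity
    have e5 : 0 ≤ x^5 * (1-x)^3 := mul_nonneg (by positivity) (pow_nonneg hxx 3)
    have e6 : 0 ≤ x^6 * (1-x)^2 := by positivity
    have e7 : 0 ≤ x^7 * (1-x) := mul_nonneg (by positivity) hxx
    have e8 : 0 ≤ x^8 := by positivity
    have key : 96 * (1+x)^5 - (96 * (1+x)^4 + 96 * u * (1+x)^3 + 48 * u^2 * (1+x)^2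
        + 16 * u^3 * (1+x) + 5 * u^4) =
        (288/25) * (x^2 * (1-x)^6) + (496/5) * (x^3 * (1-x)^5)
        + (209143/625) * (x^4 * (1-x)^4) + (345826/625) * (x^5 * (1-x)^3)
        + (14134989/31250) * (x^6 * (1-x)^2) + (4822947/31250) * (x^7 * (1-x))
        + (10353999/1250000) * x^8 := by
      rw [hu]; ring
    linarith
  have hru : u = r * (1 + x) := by rw [hr]; field_simp
  rw [hru] at hcert
  have hpoly : 1 + r + r ^ 2 / 2 + r ^ 3 / 6 + 5 * r ^ 4 / 96 ≤ 1 + x := by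
    nlinarith [hcert, pow_pos hx1 4, pow_pos hx1 2, pow_pos hx1 3]
  have hle : Real.exp r ≤ 1 + x := hexp.trans hpoly
  have hlog : r ≤ Real.log (1 + x) := (Real.le_log_iff_exp_le hx1).mpr hle
  have hmul := mul_le_mul_of_nonneg_left hlog (le_of_lt hx1)
  rw [hr, mul_div_cancel₀ _ (ne_of_gt hx1)] at hmul
  rw [hu] at hmul
  linarith

lemma myScaledMono {p q t : ℝ} (hq : 0 < q) (hpq : q ≤ p) :
    p * (Real.exp (t / p) - 1) ≤ q * (Real.exp (t / q) - 1) := by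
  have hp : 0 < p := lt_of_lt_of_le hq hpq
  have hl0 : (0:ℝ) ≤ q / p := by positivity
  have hl1 : q / p ≤ 1 := by rw [div_le_one hp]; exact hpq
  have hconv := convexOn_exp.2 (Set.mem_univ (t / q)) (Set.mem_univ (0 : ℝ))
      hl0 (by linarith : (0:ℝ) ≤ 1 - q / p) (by ring)
  simp only [smul_eq_mul, mul_zero, add_zero, Real.exp_zero, mul_one] at hconv
  have hxy : q / p * (t / q) = t / p := by field_simp
  rw [hxy] at hconv
  have h3 : Real.exp (t / p) - 1 ≤ q / p * (Real.exp (t / q) - 1) := by linarith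
  have h4 := mul_le_mul_of_nonneg_left h3 hp.le
  rw [show p * (q / p * (Real.exp (t / q) - 1)) = q * (Real.exp (t / q) - 1) by
    field_simp] at h4
  linarith

/-- Chernoff-type bound of Fung et al.: if `Xᵢ` are independent, `Xᵢ = 1/pᵢ` with
probability `pᵢ` and `0` otherwise, `p ≤ pᵢ` for all `i`, `ε ∈ (0,1)` and `N ≥ n`,
then `Pr[|∑ Xᵢ − n| > εN] < 2 e^{−0.38 ε² p N}`. -/
theorem stmt8 (n : ℕ) (Ω : Type) [MeasurableSpace Ω] (μ : Measure Ω) [IsProbabilityMeasure μ]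
    (p : Fin n → ℝ) (hp : ∀ i, 0 < p i ∧ p i ≤ 1)
    (X : Fin n → Ω → ℝ) (hmeas : ∀ i, Measurable (X i))
    (hval : ∀ i ω, X i ω = 1 / p i ∨ X i ω = 0)
    (hdist : ∀ i, μ {ω | X i ω = 1 / p i} = ENNReal.ofReal (p i))
    (hindep : iIndepFun X μ)
    (q : ℝ) (hq : 0 < q) (hq1 : q ≤ 1) (hqle : ∀ i, q ≤ p i)
    (ε : ℝ) (hε : 0 < ε) (hε1 : ε < 1)
    (N : ℝ) (hN : (n : ℝ) ≤ N) :
    (μ {ω | ε * N < |(∑ i, X i ω) - n|}).toReal <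
      2 * Real.exp (-(0.38 * ε ^ 2 * q * N)) := by
  classical
  have hN0 : (0:ℝ) ≤ N := le_trans (Nat.cast_nonneg n) hN
  rcases hN0.eq_or_lt with hNz | hNpos
  · -- degenerate case N = 0 (hence n = 0)
    have hn0 : n = 0 := by
      have : (n:ℝ) ≤ 0 := by rw [hNz]; exact hN
      exact_mod_cast le_antisymm (by exact_mod_cast this) (Nat.zero_le n)
    subst hn0
    rw [← hNz]
    have hset : {ω : Ω | ε * 0 < |(∑ i : Fin 0, X i ω) - (0:ℕ)|} = ∅ := by
      ext ω; simp
    rw [hset]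
    simp [Real.exp_pos]
  -- main case N > 0
  -- per-coordinate facts
  have hint : ∀ (t : ℝ) (i : Fin n), Integrable (fun ω => Real.exp (t * X i ω)) μ := by
    intro t i
    have hAmeas : MeasurableSet {ω | X i ω = 1 / p i} :=
      (hmeas i) (measurableSet_singleton (1 / p i))
    have hfe : (fun ω => Real.exp (t * X i ω)) =
        fun ω => Set.indicator {ω | X i ω = 1 / p i} (fun _ => Real.exp (t / p i) - 1) ω + 1 := by
      funext ω
      by_cases hω : X i ω = 1 / p i
      · rw [Set.indicator_of_mem (show ω ∈ {ω | X i ω = 1 / p i} from hω), hω, mul_one_div]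
        ring
      · have h0 : X i ω = 0 := (hval i ω).resolve_left hω
        rw [Set.indicator_of_notMem (show ω ∉ {ω | X i ω = 1 / p i} from hω), h0]
        simp
    rw [hfe]
    exact (((integrable_const _).indicator hAmeas)).add (integrable_const 1)
  have hmgf : ∀ (t : ℝ) (i : Fin n), mgf (X i) μ t = 1 + p i * (Real.exp (t / p i) - 1) := by
    intro t i
    have hAmeas : MeasurableSet {ω | X i ω = 1 / p i} :=
      (hmeas i) (measurableSet_singleton (1 / p i))
    have hfe : (fun ω => Real.exp (t * X i ω)) =
        fun ω => Set.indicator {ω | X i ω = 1 / p i} (fun _ => Real.exp (t / p i) - 1) ω + 1 := by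
      funext ω
      by_cases hω : X i ω = 1 / p i
      · rw [Set.indicator_of_mem (show ω ∈ {ω | X i ω = 1 / p i} from hω), hω, mul_one_div]
        ring
      · have h0 : X i ω = 0 := (hval i ω).resolve_left hω
        rw [Set.indicator_of_notMem (show ω ∉ {ω | X i ω = 1 / p i} from hω), h0]
        simp
    rw [mgf]
    rw [show (fun ω => Real.exp (t * X i ω)) = _ from hfe]
    rw [integral_add ((integrable_const _).indicator hAmeas) (integrable_const 1),
      integral_indicator_const _ hAmeas, integral_const, measureReal_def, hdist i,
      ENNReal.toReal_ofReal (hp i).1.le]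
    simp [smul_eq_mul]
    ring
  have hmgf_le : ∀ (t : ℝ) (i : Fin n),
      mgf (X i) μ t ≤ Real.exp (q * (Real.exp (t / q) - 1)) := by
    intro t i
    rw [hmgf t i]
    have h1 : p i * (Real.exp (t / p i) - 1) ≤ q * (Real.exp (t / q) - 1) :=
      myScaledMono hq (hqle i)
    have h2 := Real.add_one_le_exp (p i * (Real.exp (t / p i) - 1))
    calc 1 + p i * (Real.exp (t / p i) - 1)
        ≤ Real.exp (p i * (Real.exp (t / p i) - 1)) := by linarith
      _ ≤ Real.exp (q * (Real.exp (t / q) - 1)) := Real.exp_le_exp.mpr h1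
  -- sum facts
  have hintS : ∀ t : ℝ, Integrable (fun ω => Real.exp (t * (∑ i, X i) ω)) μ := fun t =>
    hindep.integrable_exp_mul_sum hmeas (fun i _ => hint t i)
  have hmgfS : ∀ t : ℝ, mgf (∑ i, X i) μ t ≤ Real.exp ((n : ℝ) * (q * (Real.exp (t / q) - 1))) := by
    intro t
    rw [hindep.mgf_sum hmeas Finset.univ]
    calc ∏ i, mgf (X i) μ t
        ≤ ∏ _i : Fin n, Real.exp (q * (Real.exp (t / q) - 1)) :=
          Finset.prod_le_prod (fun i _ => mgf_nonneg) (fun i _ => hmgf_le t i)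
      _ = Real.exp (q * (Real.exp (t / q) - 1)) ^ n := by
          rw [Finset.prod_const, Finset.card_univ, Fintype.card_fin]
      _ = Real.exp ((n : ℝ) * (q * (Real.exp (t / q) - 1))) := (Real.exp_nat_mul _ n).symm
  -- upper tail
  have hlog0 : 0 ≤ Real.log (1 + ε) := Real.log_nonneg (by linarith)
  have hL : Real.log (1 + ε) ≤ ε := by
    have := Real.log_le_sub_one_of_pos (show (0:ℝ) < 1 + ε by linarith)
    linarith
  have hup : (μ {ω | (n : ℝ) + ε * N ≤ (∑ i, X i) ω}).toReal ≤
      Real.exp (-(0.38 * ε ^ 2 * q * N)) := by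
    set t1 : ℝ := q * Real.log (1 + ε) with ht1
    have ht1_nonneg : 0 ≤ t1 := mul_nonneg hq.le hlog0
    have hch := measure_ge_le_exp_mul_mgf ((n : ℝ) + ε * N) ht1_nonneg (hintS t1)
    have htq : t1 / q = Real.log (1 + ε) := by
      rw [ht1, mul_div_cancel_left₀ _ (ne_of_gt hq)]
    have hexp1 : Real.exp (t1 / q) = 1 + ε := by
      rw [htq, Real.exp_log (by linarith)]
    have hS := hmgfS t1
    rw [hexp1] at hS
    have hfin : Real.exp (-t1 * ((n : ℝ) + ε * N)) * mgf (∑ i, X i) μ t1 ≤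
        Real.exp (-(0.38 * ε ^ 2 * q * N)) := by
      calc Real.exp (-t1 * ((n : ℝ) + ε * N)) * mgf (∑ i, X i) μ t1
          ≤ Real.exp (-t1 * ((n : ℝ) + ε * N)) *
            Real.exp ((n : ℝ) * (q * (1 + ε - 1))) :=
            mul_le_mul_of_nonneg_left hS (Real.exp_nonneg _)
        _ = Real.exp (-t1 * ((n : ℝ) + ε * N) + (n : ℝ) * (q * (1 + ε - 1))) :=
            (Real.exp_add _ _).symm
        _ ≤ Real.exp (-(0.38 * ε ^ 2 * q * N)) := by
            apply Real.exp_le_exp.mpr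
            rw [ht1]
            have h1 : 0 ≤ q * (N - (n : ℝ)) * (ε - Real.log (1 + ε)) :=
              mul_nonneg (mul_nonneg hq.le (by linarith)) (by linarith)
            have h2 : (q * N) * (ε + 0.38 * ε ^ 2) ≤ (q * N) * ((1 + ε) * Real.log (1 + ε)) :=
              mul_le_mul_of_nonneg_left (myLogBound hε hε1.le) (mul_nonneg hq.le hN0)
            nlinarith [h1, h2]
    exact hch.trans hfin
  -- lower tail
  have hlow : (μ {ω | (∑ i, X i) ω ≤ (n : ℝ) - ε * N}).toReal ≤
      Real.exp (-(q * ε ^ 2 * N / 2)) := by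
    set t2 : ℝ := -(q * ε) with ht2
    have ht2_nonpos : t2 ≤ 0 := by rw [ht2]; nlinarith
    have hch := measure_le_le_exp_mul_mgf ((n : ℝ) - ε * N) ht2_nonpos (hintS t2)
    have htq : t2 / q = -ε := by
      rw [ht2]; field_simp
    have hS := hmgfS t2
    rw [htq] at hS
    have hE1 : Real.exp (-ε) ≤ 1 - ε + ε ^ 2 / 2 := myExpNeg hε.le hε1.le
    have hE2 : 1 - ε ≤ Real.exp (-ε) := by
      have := Real.add_one_le_exp (-ε); linarith
    have hfin : Real.exp (-t2 * ((n : ℝ) - ε * N)) * mgf (∑ i, X i) μ t2 ≤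
        Real.exp (-(q * ε ^ 2 * N / 2)) := by
      calc Real.exp (-t2 * ((n : ℝ) - ε * N)) * mgf (∑ i, X i) μ t2
          ≤ Real.exp (-t2 * ((n : ℝ) - ε * N)) *
            Real.exp ((n : ℝ) * (q * (Real.exp (-ε) - 1))) :=
            mul_le_mul_of_nonneg_left hS (Real.exp_nonneg _)
        _ = Real.exp (-t2 * ((n : ℝ) - ε * N) + (n : ℝ) * (q * (Real.exp (-ε) - 1))) :=
            (Real.exp_add _ _).symm
        _ ≤ Real.exp (-(q * ε ^ 2 * N / 2)) := by
            apply Real.exp_le_exp.mpr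
            rw [ht2]
            have h1 : 0 ≤ q * (N - (n : ℝ)) * (ε + Real.exp (-ε) - 1) :=
              mul_nonneg (mul_nonneg hq.le (by linarith)) (by linarith)
            have h2 : (q * N) * (ε + Real.exp (-ε) - 1) ≤ (q * N) * (ε ^ 2 / 2) :=
              mul_le_mul_of_nonneg_left (by linarith) (mul_nonneg hq.le hN0)
            nlinarith [h1, h2]
    exact hch.trans hfin
  -- combine
  have hsub : {ω | ε * N < |(∑ i, X i ω) - n|} ⊆
      {ω | (n : ℝ) + ε * N ≤ (∑ i, X i) ω} ∪ {ω | (∑ i, X i) ω ≤ (n : ℝ) - ε * N} := by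
    intro ω hω
    simp only [Set.mem_setOf_eq] at hω
    simp only [Set.mem_union, Set.mem_setOf_eq, Finset.sum_apply]
    rcases abs_cases ((∑ i, X i ω) - (n : ℝ)) with ⟨heq, _⟩ | ⟨heq, _⟩
    · left; rw [heq] at hω; linarith
    · right; rw [heq] at hω; linarith
  have hmono : (μ {ω | ε * N < |(∑ i, X i ω) - n|}).toReal ≤
      (μ {ω | (n : ℝ) + ε * N ≤ (∑ i, X i) ω}).toReal +
      (μ {ω | (∑ i, X i) ω ≤ (n : ℝ) - ε * N}).toReal := by
    have hle := (measure_mono (μ := μ) hsub).trans (measure_union_le _ _)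
    have hne : μ {ω | (n : ℝ) + ε * N ≤ (∑ i, X i) ω} +
        μ {ω | (∑ i, X i) ω ≤ (n : ℝ) - ε * N} ≠ ⊤ :=
      ENNReal.add_ne_top.2 ⟨measure_ne_top _ _, measure_ne_top _ _⟩
    have := ENNReal.toReal_mono hne hle
    rwa [ENNReal.toReal_add (measure_ne_top _ _) (measure_ne_top _ _)] at this
  have hstrict : Real.exp (-(q * ε ^ 2 * N / 2)) < Real.exp (-(0.38 * ε ^ 2 * q * N)) := by
    apply Real.exp_lt_exp.mpr
    nlinarith [mul_pos (mul_pos hq (pow_pos hε 2)) hNpos]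
  calc (μ {ω | ε * N < |(∑ i, X i ω) - n|}).toReal
      ≤ (μ {ω | (n : ℝ) + ε * N ≤ (∑ i, X i) ω}).toReal +
        (μ {ω | (∑ i, X i) ω ≤ (n : ℝ) - ε * N}).toReal := hmono
    _ ≤ Real.exp (-(0.38 * ε ^ 2 * q * N)) + Real.exp (-(q * ε ^ 2 * N / 2)) :=
        add_le_add hup hlow
    _ < 2 * Real.exp (-(0.38 * ε ^ 2 * q * N)) := by linarith [hstrict]
end

section
/- Let G = (V, E) be an undirected unweighted graph on n vertices whose minimum cut has value k > 0 (i.e., G is k-connected and some cut has value exactly k). Then for every real α ≥ 1, the number of cuts of G having value at most αk is at most n^{2α}, where cuts are identified with unordered partitions {S, V∖S} for ∅ ≠ S ≠ V. -/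
open Finset

variable {V : Type} [Fintype V] [DecidableEq V]

namespace KargerAux
variable {V : Type} [Fintype V] [DecidableEq V]

def cutW (w : V → V → ℕ) (S : Finset V) : ℕ :=
  ∑ u ∈ S, ∑ v ∈ Sᶜ, w u v

section Contract

variable (w : V → V → ℕ) (u v : V)

def gw (x y : V) : ℕ :=
  w x y + (if x = u then w v y else 0) + (if y = u then w x v else 0)

def cw (a b : {x : V // x ≠ v}) : ℕ := gw w u v a.1 b.1

def Φ (v : V) (S : Finset V) : Finset {x : V // x ≠ v} :=
  univ.filter (fun a => a.1 ∈ S)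

lemma Φ_compl (S : Finset V) : (Φ v S)ᶜ = Φ v Sᶜ := by
  ext a; simp [Φ]

lemma sum_Φ (A : Finset V) (f : V → ℕ) :
    ∑ a ∈ Φ v A, f a.1 = ∑ x ∈ A.erase v, f x := by
  have himg : (Φ v A).image Subtype.val = A.erase v := by
    ext x
    simp only [Φ, Finset.mem_image, Finset.mem_filter, Finset.mem_univ, true_and,
      Finset.mem_erase]
    constructor
    · rintro ⟨a, ha, rfl⟩; exact ⟨a.2, ha⟩
    · rintro ⟨hx, hxA⟩; exact ⟨⟨x, hx⟩, hxA, rfl⟩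
  rw [← himg, Finset.sum_image]
  intro a _ b _ h
  exact Subtype.val_injective h

lemma cutW_Φ (huv : u ≠ v) (S : Finset V) (hS : u ∈ S ↔ v ∈ S) :
    cutW (cw w u v) (Φ v S) = cutW w S := by
  have step1 : cutW (cw w u v) (Φ v S)
      = ∑ x ∈ S.erase v, ∑ y ∈ Sᶜ.erase v, gw w u v x y := by
    calc cutW (cw w u v) (Φ v S)
        = ∑ a ∈ Φ v S, (fun x => ∑ b ∈ Φ v Sᶜ, gw w u v x b.1) a.1 := by
          rw [cutW, Φ_compl]; rfl
      _ = ∑ x ∈ S.erase v, ∑ b ∈ Φ v Sᶜ, gw w u v x b.1 :=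
          sum_Φ v S (fun x => ∑ b ∈ Φ v Sᶜ, gw w u v x b.1)
      _ = ∑ x ∈ S.erase v, ∑ y ∈ Sᶜ.erase v, gw w u v x y :=
          Finset.sum_congr rfl fun x _ => sum_Φ v Sᶜ (fun y => gw w u v x y)
  rw [step1, cutW]
  by_cases hv : v ∈ S
  · have hu : u ∈ S := hS.mpr hv
    have h1 : Sᶜ.erase v = Sᶜ := Finset.erase_eq_of_notMem (by simp [hv])
    rw [h1]
    have h2 : ∀ x ∈ S.erase v, ∑ y ∈ Sᶜ, gw w u v x y
        = (∑ y ∈ Sᶜ, w x y) + (if x = u then ∑ y ∈ Sᶜ, w v y else 0) := by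
      intro x _
      have : ∀ y ∈ Sᶜ, gw w u v x y = w x y + (if x = u then w v y else 0) := by
        intro y hy
        have hyu : y ≠ u := by rintro rfl; exact (Finset.mem_compl.mp hy) hu
        rw [gw, if_neg hyu, add_zero]
      rw [Finset.sum_congr rfl this, Finset.sum_add_distrib]
      congr 1
      split <;> simp
    rw [Finset.sum_congr rfl h2, Finset.sum_add_distrib, Finset.sum_ite_eq',
      if_pos (Finset.mem_erase.mpr ⟨huv, hu⟩)]
    exact Finset.sum_erase_add _ _ hv
  · have hu : u ∉ S := fun h => hv (hS.mp h)
    have h1 : S.erase v = S := Finset.erase_eq_of_notMem hv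
    rw [h1]
    refine Finset.sum_congr rfl fun x hx => ?_
    have hxu : x ≠ u := by rintro rfl; exact hu hx
    have : ∀ y ∈ Sᶜ.erase v, gw w u v x y = w x y + (if y = u then w x v else 0) := by
      intro y _
      rw [gw, if_neg hxu, add_zero]
    rw [Finset.sum_congr rfl this, Finset.sum_add_distrib, Finset.sum_ite_eq',
      if_pos (Finset.mem_erase.mpr ⟨huv, Finset.mem_compl.mpr hu⟩)]
    exact Finset.sum_erase_add _ _ (Finset.mem_compl.mpr hv)

section Props2
variable (u v : V)
variable (u v : V)

lemma Φ_mem (S : Finset V) (a : {x : V // x ≠ v}) :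
    a ∈ (Φ v S) ↔ a.1 ∈ S := by simp [Φ]

lemma Φ_inj (huv : u ≠ v) {S T : Finset V} (hS : u ∈ S ↔ v ∈ S) (hT : u ∈ T ↔ v ∈ T)
    (h : (Φ v S)
       = (Φ v T)) : S = T := by
  unfold Φ at h
  have key : ∀ x : V, x ≠ v → (x ∈ S ↔ x ∈ T) := by
    intro x hx
    have := Finset.ext_iff.mp h ⟨x, hx⟩
    simpa using this
  ext x
  by_cases hx : x = v
  · subst hx
    rw [← hS, ← hT]
    exact key u huv
  · exact key x hx

lemma Φ_nonempty (huv : u ≠ v) {S : Finset V} (hne : S.Nonempty) (hside : u ∈ S ↔ v ∈ S) :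
    (Φ v S).Nonempty := by
  unfold Φ
  obtain ⟨x, hx⟩ := hne
  by_cases hxv : x = v
  · subst hxv
    exact ⟨⟨u, huv⟩, by simp [hside.mpr hx]⟩
  · exact ⟨⟨x, hxv⟩, by simp [hx]⟩

lemma Φ_ne_univ (huv : u ≠ v) {S : Finset V} (hne : S ≠ univ) (hside : u ∈ S ↔ v ∈ S) :
    (Φ v S) ≠ univ := by
  unfold Φ
  intro h
  apply hne
  ext x
  simp only [Finset.mem_univ, iff_true]
  by_cases hxv : x = v
  · subst hxv
    have := Finset.ext_iff.mp h ⟨u, huv⟩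
    simp only [Finset.mem_filter, Finset.mem_univ, true_and, iff_true] at this
    exact hside.mp this
  · have := Finset.ext_iff.mp h ⟨x, hxv⟩
    simpa using this

lemma Φ_surj (huv : u ≠ v) (S' : Finset {x : V // x ≠ v}) (hne : S'.Nonempty) (hnu : S' ≠ univ) :
    ∃ T : Finset V, (u ∈ T ↔ v ∈ T) ∧
      (Φ v T) = S' ∧ T.Nonempty ∧ T ≠ univ := by
  unfold Φ
  classical
  set T0 : Finset V := S'.image Subtype.val with hT0
  have hmem0 : ∀ x : V, x ∈ T0 ↔ ∃ hx : x ≠ v, ⟨x, hx⟩ ∈ S' := by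
    intro x
    simp only [hT0, Finset.mem_image]
    constructor
    · rintro ⟨a, ha, rfl⟩; exact ⟨a.2, ha⟩
    · rintro ⟨hx, hS⟩; exact ⟨⟨x, hx⟩, hS, rfl⟩
  by_cases hu' : (⟨u, huv⟩ : {x : V // x ≠ v}) ∈ S'
  · refine ⟨insert v T0, ?_, ?_, ?_, ?_⟩
    · have hvT : v ∈ insert v T0 := Finset.mem_insert_self _ _
      have huT : u ∈ insert v T0 := Finset.mem_insert_of_mem ((hmem0 u).mpr ⟨huv, hu'⟩)
      simp [hvT, huT]
    · ext a
      simp only [Finset.mem_filter, Finset.mem_univ, true_and, Finset.mem_insert]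
      constructor
      · rintro (h | h)
        · exact absurd h a.2
        · obtain ⟨hx, hS⟩ := (hmem0 a.1).mp h
          convert hS
      · intro h
        right
        exact (hmem0 a.1).mpr ⟨a.2, h⟩
    · exact ⟨v, Finset.mem_insert_self _ _⟩
    · intro h
      obtain ⟨b, hb⟩ : ∃ b, b ∉ S' := by
        by_contra hc
        push_neg at hc
        exact hnu (Finset.eq_univ_iff_forall.mpr hc)
      have : b.1 ∈ insert v T0 := h ▸ Finset.mem_univ _
      rcases Finset.mem_insert.mp this with h1 | h1
      · exact b.2 h1
      · obtain ⟨hx, hS⟩ := (hmem0 b.1).mp h1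
        exact hb (by convert hS)
  · refine ⟨T0, ?_, ?_, ?_, ?_⟩
    · constructor
      · intro h
        obtain ⟨hx, hS⟩ := (hmem0 u).mp h
        exact absurd (by convert hS : (⟨u, huv⟩ : {x : V // x ≠ v}) ∈ S') hu'
      · intro h
        obtain ⟨hx, _⟩ := (hmem0 v).mp h
        exact absurd rfl hx
    · ext a
      simp only [Finset.mem_filter, Finset.mem_univ, true_and]
      constructor
      · intro h
        obtain ⟨hx, hS⟩ := (hmem0 a.1).mp h
        convert hS
      · intro h
        exact (hmem0 a.1).mpr ⟨a.2, h⟩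
    · obtain ⟨b, hb⟩ := hne
      exact ⟨b.1, (hmem0 b.1).mpr ⟨b.2, hb⟩⟩
    · intro h
      have : v ∈ T0 := h ▸ Finset.mem_univ _
      obtain ⟨hx, _⟩ := (hmem0 v).mp this
      exact hx rfl

end Props2


lemma cw_symm (w : V → V → ℕ) (hsymm : ∀ a b, w a b = w b a) (u v : V) :
    ∀ a b, cw w u v a b = cw w u v b a := by
  intro a b
  unfold cw gw
  rw [hsymm a.1 b.1, hsymm v b.1, hsymm a.1 v]
  ring

lemma cw_conn (w : V → V → ℕ) (k : ℕ)
    (hconn : ∀ S : Finset V, S.Nonempty → S ≠ univ → k ≤ cutW w S)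
    (u v : V) (huv : u ≠ v) :
    ∀ S' : Finset {x : V // x ≠ v}, S'.Nonempty → S' ≠ univ → k ≤ cutW (cw w u v) S' := by
  intro S' h1 h2
  obtain ⟨T, hside, hΦ, h3, h4⟩ := Φ_surj u v huv S' h1 h2
  rw [← hΦ, cutW_Φ w u v huv T hside]
  exact hconn T h3 h4

lemma column (w : V → V → ℕ) (u v : V) (huv : u ≠ v) (t : ℝ) :
    ((univ.filter (fun S : Finset V =>
        S.Nonempty ∧ S ≠ univ ∧ (cutW w S : ℝ) ≤ t)).filter
          (fun S => u ∈ S ↔ v ∈ S)).card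
      ≤ ((univ.filter (fun S' : Finset {x : V // x ≠ v} =>
          S'.Nonempty ∧ S' ≠ univ ∧ (cutW (cw w u v) S' : ℝ) ≤ t)).card) := by
  apply Finset.card_le_card_of_injOn (fun S => Φ v S)
  · intro S hS
    simp only [Finset.coe_filter, Finset.mem_coe, Finset.coe_univ, Set.mem_univ,
      Set.mem_setOf_eq, Finset.mem_filter, Finset.mem_univ, true_and] at hS ⊢
    obtain ⟨⟨h1, h2, h3⟩, h4⟩ := hS
    exact ⟨Φ_nonempty u v huv h1 h4, Φ_ne_univ u v huv h2 h4,
      by rw [cutW_Φ w u v huv S h4]; exact h3⟩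
  · intro S hS T hT h
    simp only [Finset.coe_filter, Set.mem_setOf_eq] at hS hT
    exact Φ_inj u v huv hS.2 hT.2 h

lemma cutW_compl (w : V → V → ℕ) (hsymm : ∀ a b, w a b = w b a) (S : Finset V) :
    cutW w Sᶜ = cutW w S := by
  rw [cutW, cutW, compl_compl, Finset.sum_comm]
  exact Finset.sum_congr rfl fun a _ => Finset.sum_congr rfl fun b _ => hsymm b a

lemma sep_eq (w : V → V → ℕ) (hsymm : ∀ a b, w a b = w b a) (S : Finset V) :
    ∑ x : V, ∑ y ∈ univ.erase x, (if (x ∈ S ↔ y ∈ S) then 0 else w x y)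
      = 2 * cutW w S := by
  have step1 : ∀ x : V, ∑ y ∈ univ.erase x, (if (x ∈ S ↔ y ∈ S) then 0 else w x y)
      = ∑ y : V, (if (x ∈ S ↔ y ∈ S) then 0 else w x y) := by
    intro x
    exact Finset.sum_erase _ (by simp)
  rw [Finset.sum_congr rfl fun x _ => step1 x]
  rw [← Finset.sum_add_sum_compl S
    (fun x => ∑ y : V, (if (x ∈ S ↔ y ∈ S) then 0 else w x y))]
  have hS : ∀ x ∈ S, ∑ y : V, (if (x ∈ S ↔ y ∈ S) then 0 else w x y)
      = ∑ y ∈ Sᶜ, w x y := by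
    intro x hx
    have : ∀ y : V, (if (x ∈ S ↔ y ∈ S) then 0 else w x y)
        = (if y ∈ Sᶜ then w x y else 0) := by
      intro y
      by_cases hy : y ∈ S <;> simp [hx, hy]
    rw [Finset.sum_congr rfl fun y _ => this y, Finset.sum_ite_mem, Finset.univ_inter]
  have hSc : ∀ x ∈ Sᶜ, ∑ y : V, (if (x ∈ S ↔ y ∈ S) then 0 else w x y)
      = ∑ y ∈ S, w x y := by
    intro x hx
    have hx' : x ∉ S := Finset.mem_compl.mp hx
    have : ∀ y : V, (if (x ∈ S ↔ y ∈ S) then 0 else w x y)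
        = (if y ∈ S then w x y else 0) := by
      intro y
      by_cases hy : y ∈ S <;> simp [hx', hy]
    rw [Finset.sum_congr rfl fun y _ => this y, Finset.sum_ite_mem, Finset.univ_inter]
  rw [Finset.sum_congr rfl hS, Finset.sum_congr rfl hSc]
  have : ∑ x ∈ Sᶜ, ∑ y ∈ S, w x y = cutW w Sᶜ := by
    rw [cutW, compl_compl]
  rw [this, cutW_compl w hsymm S, ← cutW, two_mul]

lemma row_id (w : V → V → ℕ) (hsymm : ∀ a b, w a b = w b a) (S : Finset V) :
    (∑ x : V, ∑ y ∈ univ.erase x, (if (x ∈ S ↔ y ∈ S) then w x y else 0)) + 2 * cutW w S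
      = ∑ x : V, ∑ y ∈ univ.erase x, w x y := by
  rw [← sep_eq w hsymm S, ← Finset.sum_add_distrib]
  refine Finset.sum_congr rfl fun x _ => ?_
  rw [← Finset.sum_add_distrib]
  refine Finset.sum_congr rfl fun y _ => ?_
  by_cases h : (x ∈ S ↔ y ∈ S) <;> simp [h]

lemma M_ge (w : V → V → ℕ) (k : ℕ)
    (hconn : ∀ S : Finset V, S.Nonempty → S ≠ univ → k ≤ cutW w S)
    (hn : 1 < Fintype.card V) :
    Fintype.card V * k ≤ ∑ x : V, ∑ y ∈ univ.erase x, w x y := by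
  have hsing : ∀ x : V, k ≤ ∑ y ∈ univ.erase x, w x y := by
    intro x
    have h2 : ({x} : Finset V) ≠ univ := by
      intro h
      have := congrArg Finset.card h
      rw [Finset.card_singleton, Finset.card_univ] at this
      omega
    have := hconn {x} (Finset.singleton_nonempty x) h2
    rw [cutW, Finset.sum_singleton, Finset.compl_singleton] at this
    exact this
  calc Fintype.card V * k = ∑ _x : V, k := by
        rw [Finset.sum_const, Finset.card_univ, smul_eq_mul]
    _ ≤ _ := Finset.sum_le_sum fun x _ => hsing x

end Contract

noncomputable def Bnd (α : ℝ) : ℕ → ℝ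
  | 0 => 1
  | (n+1) => if ((n : ℝ) + 1 ≤ 2*α + 1) then 2 ^ n
             else (((n:ℝ)+1)/(((n:ℝ)+1) - 2*α)) * Bnd α n

lemma Bnd_pos {α : ℝ} (hα : 1 ≤ α) : ∀ n, 0 < Bnd α n := by
  intro n
  induction n with
  | zero => norm_num [Bnd]
  | succ m ih =>
    rw [Bnd]
    split
    · positivity
    · rename_i h
      push_neg at h
      have h2 : (0:ℝ) < ((m:ℝ)+1) - 2*α := by linarith
      have h3 : (0:ℝ) < (m:ℝ)+1 := by positivity
      exact mul_pos (div_pos h3 h2) ih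

lemma key (α : ℝ) (hα : 1 ≤ α) (k : ℕ) (hk : 0 < k) :
    ∀ (n : ℕ) (V : Type) [Fintype V] [DecidableEq V], Fintype.card V = n →
      ∀ w : V → V → ℕ, (∀ a b, w a b = w b a) →
      (∀ S : Finset V, S.Nonempty → S ≠ Finset.univ → k ≤ cutW w S) →
      (((Finset.univ.filter (fun S : Finset V =>
          S.Nonempty ∧ S ≠ Finset.univ ∧ (cutW w S : ℝ) ≤ α * k)).card : ℝ)
        ≤ 2 * Bnd α n) := by
  intro n
  induction n using Nat.strong_induction_on with
  | _ n IH =>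
    intro V _ _ hcard w hsymm hconn
    by_cases hbase : (n : ℝ) ≤ 2 * α + 1
    · have h1 : ((univ.filter (fun S : Finset V =>
          S.Nonempty ∧ S ≠ Finset.univ ∧ (cutW w S : ℝ) ≤ α * k)).card : ℝ) ≤ (2:ℝ)^n := by
        have hle : (univ.filter (fun S : Finset V =>
            S.Nonempty ∧ S ≠ Finset.univ ∧ (cutW w S : ℝ) ≤ α * k)).card
            ≤ (univ : Finset (Finset V)).card := Finset.card_filter_le _ _
        have h2 : (univ : Finset (Finset V)).card = 2^n := by
          rw [Finset.card_univ, Fintype.card_finset, hcard]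
        rw [h2] at hle
        exact_mod_cast hle
      have h2 : (2:ℝ)^n ≤ 2 * Bnd α n := by
        cases n with
        | zero => norm_num [Bnd]
        | succ m =>
          rw [Bnd, if_pos (by exact_mod_cast hbase)]
          exact le_of_eq (by ring)
      linarith
    · push_neg at hbase
      have hn4 : 4 ≤ n := by
        have h3 : (3:ℝ) < (n:ℝ) := by linarith
        have h4 : (3:ℕ) < n := by exact_mod_cast h3
        omega
      set 𝒮 := Finset.univ.filter (fun S : Finset V =>
        S.Nonempty ∧ S ≠ Finset.univ ∧ (cutW w S : ℝ) ≤ α * k) with h𝒮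
      set M : ℕ := ∑ x : V, ∑ y ∈ univ.erase x, w x y with hM
      have hswap : ∑ x : V, ∑ y ∈ univ.erase x, w x y * (𝒮.filter (fun S => x ∈ S ↔ y ∈ S)).card
          = ∑ S ∈ 𝒮, ∑ x : V, ∑ y ∈ univ.erase x, (if (x ∈ S ↔ y ∈ S) then w x y else 0) := by
        have hpt : ∀ x y : V, w x y * (𝒮.filter (fun S => x ∈ S ↔ y ∈ S)).card
            = ∑ S ∈ 𝒮, (if (x ∈ S ↔ y ∈ S) then w x y else 0) := by
          intro x y
          rw [Finset.card_filter, Finset.mul_sum]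
          exact Finset.sum_congr rfl fun S _ => by split <;> simp
        calc ∑ x : V, ∑ y ∈ univ.erase x, w x y * (𝒮.filter (fun S => x ∈ S ↔ y ∈ S)).card
            = ∑ x : V, ∑ y ∈ univ.erase x, ∑ S ∈ 𝒮, (if (x ∈ S ↔ y ∈ S) then w x y else 0) :=
              Finset.sum_congr rfl fun x _ => Finset.sum_congr rfl fun y _ => hpt x y
          _ = ∑ x : V, ∑ S ∈ 𝒮, ∑ y ∈ univ.erase x, (if (x ∈ S ↔ y ∈ S) then w x y else 0) :=
              Finset.sum_congr rfl fun x _ => Finset.sum_comm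
          _ = ∑ S ∈ 𝒮, ∑ x : V, ∑ y ∈ univ.erase x, (if (x ∈ S ↔ y ∈ S) then w x y else 0) :=
              Finset.sum_comm
      have hrow : ∀ S ∈ 𝒮, ((M:ℝ) - 2*(α*k))
          ≤ ((∑ x : V, ∑ y ∈ univ.erase x, (if (x ∈ S ↔ y ∈ S) then w x y else 0) : ℕ) : ℝ) := by
        intro S hS
        have hcut : (cutW w S : ℝ) ≤ α * k := (Finset.mem_filter.mp (h𝒮 ▸ hS)).2.2.2
        have hid := row_id w hsymm S
        have hid' : ((∑ x : V, ∑ y ∈ univ.erase x,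
            (if (x ∈ S ↔ y ∈ S) then w x y else 0) : ℕ) : ℝ) + 2 * (cutW w S : ℝ) = (M:ℝ) := by
          exact_mod_cast congrArg (Nat.cast (R := ℝ)) hid
        linarith
      have hcol : ∀ x y : V, x ≠ y →
          ((𝒮.filter (fun S => x ∈ S ↔ y ∈ S)).card : ℝ) ≤ 2 * Bnd α (n-1) := by
        intro x y hxy
        have hcard' : Fintype.card {z : V // z ≠ y} = n - 1 := by
          have h0 := Fintype.card_subtype_compl (fun z : V => z = y)
          rw [Fintype.card_subtype_eq, hcard] at h0
          exact h0
        have hIH := IH (n-1) (by omega) {z : V // z ≠ y} hcard' (cw w x y)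
          (cw_symm w hsymm x y) (cw_conn w k hconn x y hxy)
        have hcol0 := column w x y hxy (α * k)
        rw [← h𝒮] at hcol0
        calc ((𝒮.filter (fun S => x ∈ S ↔ y ∈ S)).card : ℝ)
            ≤ ((univ.filter (fun S' : Finset {z : V // z ≠ y} =>
                S'.Nonempty ∧ S' ≠ univ ∧ (cutW (cw w x y) S' : ℝ) ≤ α * k)).card : ℝ) := by
              exact_mod_cast hcol0
          _ ≤ 2 * Bnd α (n-1) := hIH
      have hBpos1 := Bnd_pos hα (n-1)
      have hNk : ((𝒮.card : ℝ)) * ((M:ℝ) - 2*(α*k)) ≤ (M:ℝ) * (2 * Bnd α (n-1)) := by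
        have lower : (𝒮.card : ℝ) * ((M:ℝ) - 2*(α*k))
            ≤ ((∑ S ∈ 𝒮, ∑ x : V, ∑ y ∈ univ.erase x,
                (if (x ∈ S ↔ y ∈ S) then w x y else 0) : ℕ) : ℝ) := by
          calc (𝒮.card : ℝ) * ((M:ℝ) - 2*(α*k))
              = ∑ _S ∈ 𝒮, ((M:ℝ) - 2*(α*k)) := by
                rw [Finset.sum_const, nsmul_eq_mul]
            _ ≤ ∑ S ∈ 𝒮, ((∑ x : V, ∑ y ∈ univ.erase x,
                (if (x ∈ S ↔ y ∈ S) then w x y else 0) : ℕ) : ℝ) := Finset.sum_le_sum hrow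
            _ = _ := by push_cast; rfl
        have upper : ((∑ x : V, ∑ y ∈ univ.erase x,
              w x y * (𝒮.filter (fun S => x ∈ S ↔ y ∈ S)).card : ℕ) : ℝ)
            ≤ (M:ℝ) * (2 * Bnd α (n-1)) := by
          push_cast
          rw [hM]
          push_cast
          rw [Finset.sum_mul]
          refine Finset.sum_le_sum fun x _ => ?_
          rw [Finset.sum_mul]
          refine Finset.sum_le_sum fun y hy => ?_
          have hxy : x ≠ y := (Finset.mem_erase.mp hy).1.symm
          exact mul_le_mul_of_nonneg_left (hcol x y hxy) (by positivity)
        rw [hswap] at upper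
        exact le_trans lower upper
      have hM_ge : ((n:ℝ)) * k ≤ (M:ℝ) := by
        have h0 := M_ge w k hconn (by rw [hcard]; omega)
        rw [hcard] at h0
        exact_mod_cast h0
      have hkR : (1:ℝ) ≤ (k:ℝ) := by exact_mod_cast hk
      have hden : 0 < (M:ℝ) - 2*(α*k) := by nlinarith
      have hmono : (M:ℝ) * ((n:ℝ) - 2*α) ≤ (n:ℝ) * ((M:ℝ) - 2*(α*k)) := by nlinarith
      obtain ⟨m, rfl⟩ : ∃ m, n = m + 1 := ⟨n-1, by omega⟩
      have hnm : ((m+1:ℕ):ℝ) = (m:ℝ)+1 := by push_cast; ring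
      have hbase' : 2*α + 1 < (m:ℝ)+1 := by rw [← hnm]; exact hbase
      have hBnd : Bnd α (m+1) = (((m:ℝ)+1)/(((m:ℝ)+1) - 2*α)) * Bnd α m := by
        rw [Bnd, if_neg (by linarith)]
      have hnsub : (0:ℝ) < ((m:ℝ)+1) - 2*α := by linarith
      have hm1 : m + 1 - 1 = m := rfl
      rw [hm1] at hNk hBpos1
      rw [hnm] at hmono
      have final : (𝒮.card:ℝ) * (((m:ℝ)+1) - 2*α) ≤ ((m:ℝ)+1) * (2 * Bnd α m) := by
        have e1 := mul_le_mul_of_nonneg_right hNk hnsub.le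
        have e2 := mul_le_mul_of_nonneg_right hmono
          (by positivity : (0:ℝ) ≤ 2 * Bnd α m)
        nlinarith [hden]
      rw [hBnd]
      have hrw : 2 * ((((m:ℝ)+1)/(((m:ℝ)+1) - 2*α)) * Bnd α m)
          = (((m:ℝ)+1) * (2 * Bnd α m))/(((m:ℝ)+1) - 2*α) := by
        field_simp
      rw [hrw, le_div_iff₀ hnsub]
      exact final



lemma two_pow_le_factorial : ∀ r : ℕ, 1 ≤ r → (2:ℕ)^(r-1) ≤ Nat.factorial r := by
  intro r
  induction r with
  | zero => omega
  | succ q ih =>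
    intro _
    rcases Nat.eq_zero_or_pos q with hq | hq
    · subst hq; simp [Nat.factorial]
    · have h1 := ih hq
      have h2 : q + 1 - 1 = q := rfl
      rw [h2, Nat.factorial_succ]
      calc (2:ℕ)^q = 2 * 2^(q-1) := by
            rw [← pow_succ']
            congr 1
            omega
        _ ≤ 2 * Nat.factorial q := Nat.mul_le_mul_left 2 h1
        _ ≤ (q+1) * Nat.factorial q := Nat.mul_le_mul_right _ (by omega)

lemma choose_mul_fac_le (n s : ℕ) : n.choose s * Nat.factorial s ≤ n ^ s := by
  rw [mul_comm, ← Nat.descFactorial_eq_factorial_mul_choose]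
  exact Nat.descFactorial_le_pow n s

lemma choose_ratio (q s : ℕ) (hs : s ≤ q) :
    ((q:ℝ)+1) * (q.choose s : ℝ) = ((q+1).choose s : ℝ) * (((q:ℝ)+1) - s) := by
  have h1 : (q+1) * q.choose s = (q+1).choose (s+1) * (s+1) := Nat.add_one_mul_choose_eq q s
  have h2 : (q+1).choose (s+1) * (s+1) = (q+1).choose s * (q+1-s) := Nat.choose_succ_right_eq (q+1) s
  have h3 : (q+1) * q.choose s = (q+1).choose s * (q+1-s) := h1.trans h2
  have h4 := congrArg (Nat.cast (R := ℝ)) h3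
  push_cast [Nat.cast_sub (by omega : s ≤ q+1)] at h4
  convert h4 using 2 <;> push_cast <;> ring

lemma Bnd_le_rpow {α : ℝ} (hα : 1 ≤ α) {n : ℕ} (hn : 2 ≤ n) :
    Bnd α n ≤ (n:ℝ) ^ (2*α) := by
  have hn1 : (1:ℝ) ≤ (n:ℝ) := by exact_mod_cast Nat.one_le_iff_ne_zero.mpr (by omega)
  by_cases hsmall : (n : ℝ) ≤ 2*α + 1
  · obtain ⟨m, rfl⟩ : ∃ m, n = m + 1 := ⟨n-1, by omega⟩
    have h1 : Bnd α (m+1) = 2^m := by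
      rw [Bnd, if_pos (by push_cast at hsmall ⊢; linarith)]
    rw [h1]
    calc (2:ℝ)^m ≤ ((m:ℝ)+1)^m := by
          apply pow_le_pow_left₀ (by norm_num)
          have h2m : (2:ℝ) ≤ ((m+1:ℕ):ℝ) := by exact_mod_cast hn
          push_cast at h2m
          linarith
      _ = ((m+1:ℕ):ℝ) ^ ((m:ℕ):ℝ) := by
          rw [Real.rpow_natCast]
          push_cast
          ring
      _ ≤ ((m+1:ℕ):ℝ) ^ (2*α) := by
          apply Real.rpow_le_rpow_of_exponent_le hn1
          push_cast at hsmall ⊢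
          linarith
  · push_neg at hsmall
    set r : ℕ := ⌊2*α⌋₊ + 1 with hr
    have h2α2 : (2:ℝ) ≤ 2*α := by linarith
    have hfl : ((⌊2*α⌋₊ : ℝ)) ≤ 2*α := Nat.floor_le (by linarith)
    have hflt : 2*α < (⌊2*α⌋₊ : ℝ) + 1 := Nat.lt_floor_add_one _
    have hrcast : (r:ℝ) = (⌊2*α⌋₊ : ℝ) + 1 := by push_cast [hr]; ring
    have hr1 : (r:ℝ) - 1 ≤ 2*α := by rw [hrcast]; linarith
    have hr2 : 2*α < (r:ℝ) := by rw [hrcast]; linarith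
    have hr3 : 3 ≤ r := by
      have : 2 ≤ ⌊2*α⌋₊ := Nat.le_floor (by push_cast; linarith)
      omega
    set θ : ℝ := (r:ℝ) - 2*α with hθ
    have hθ0 : 0 < θ := by rw [hθ]; linarith
    have hθ1 : θ ≤ 1 := by rw [hθ]; linarith
    have hrn : r < n := by
      have : (r:ℝ) < (n:ℝ) := by linarith
      exact_mod_cast this
    set F : ℕ → ℝ := fun p =>
      (2:ℝ)^(r-1) * (((p.choose (r-1) : ℝ))/(r:ℝ)) ^ θ * ((p.choose r : ℝ)) ^ (1-θ) with hF
    have main : ∀ p : ℕ, r ≤ p → Bnd α p ≤ F p := by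
      intro p
      induction p with
      | zero => intro h; omega
      | succ q ihq =>
        intro hrq
        rcases eq_or_lt_of_le hrq with heq | hlt
        · -- base case p = r
          rw [← heq]
          have hBr : Bnd α r = 2^(r-1) := by
            obtain ⟨s, hs⟩ : ∃ s, r = s + 1 := ⟨r - 1, by omega⟩
            have hcond : ((s:ℝ)) + 1 ≤ 2*α + 1 := by
              have : ((s:ℝ)) = (r:ℝ) - 1 := by rw [hs]; push_cast; ring
              rw [this]
              linarith
            rw [hs, Bnd, if_pos hcond]
            congr 1
          have hFr : F r = 2^(r-1) := by
            rw [hF]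
            simp only
            have h1 : r.choose (r-1) = r := by
              rw [Nat.choose_symm (by omega)]
              simp [Nat.sub_sub_self (by omega : 1 ≤ r), Nat.choose_one_right]
            have h2 : r.choose r = 1 := Nat.choose_self r
            rw [h1, h2]
            rw [div_self (by positivity : (r:ℝ) ≠ 0)]
            rw [Real.one_rpow]
            norm_num
          rw [hBr, hFr]
        · -- inductive step: q ≥ r
          have hq : r ≤ q := by omega
          have hBq := ihq hq
          set Q : ℝ := (q:ℝ) + 1 with hQ
          have hQpos : 0 < Q := by positivity
          have hQr : (r:ℝ) ≤ (q:ℝ) := by exact_mod_cast hq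
          have hd1 : 0 < Q - ((r:ℝ)-1) := by rw [hQ]; linarith
          have hd2 : 0 < Q - (r:ℝ) := by rw [hQ]; linarith
          have hd3 : 0 < Q - 2*α := by rw [hQ]; linarith
          have hBstep : Bnd α (q+1) = (Q/(Q - 2*α)) * Bnd α q := by
            rw [Bnd, if_neg]
            push_neg
            linarith
          -- choose ratios
          have hc1 : ((q+1).choose (r-1) : ℝ) = Q * (q.choose (r-1) : ℝ) / (Q - ((r:ℝ)-1)) := by
            have := choose_ratio q (r-1) (by omega)
            have hcast : ((r-1 : ℕ) : ℝ) = (r:ℝ) - 1 := by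
              push_cast [Nat.cast_sub (by omega : 1 ≤ r)]
              ring
            rw [hcast, ← hQ] at this
            rw [eq_div_iff hd1.ne']
            linear_combination -this
          have hc2 : ((q+1).choose r : ℝ) = Q * (q.choose r : ℝ) / (Q - (r:ℝ)) := by
            have := choose_ratio q r hq
            rw [← hQ] at this
            rw [eq_div_iff hd2.ne']
            linear_combination -this
          -- scalar inequality
          have hscalar : Q/(Q - 2*α) ≤ (Q/(Q-((r:ℝ)-1)))^θ * (Q/(Q-(r:ℝ)))^(1-θ) := by
            have hgm : (Q-((r:ℝ)-1))^θ * (Q-(r:ℝ))^(1-θ)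
                ≤ θ*(Q-((r:ℝ)-1)) + (1-θ)*(Q-(r:ℝ)) := by
              have := Real.geom_mean_le_arith_mean2_weighted (w₁ := θ) (w₂ := 1-θ)
                (p₁ := Q-((r:ℝ)-1)) (p₂ := Q-(r:ℝ)) hθ0.le (by linarith) hd1.le hd2.le (by ring)
              linarith [this]
            have hsum : θ*(Q-((r:ℝ)-1)) + (1-θ)*(Q-(r:ℝ)) = Q - 2*α := by
              rw [hθ]; ring
            rw [hsum] at hgm
            have hgmpos : 0 < (Q-((r:ℝ)-1))^θ * (Q-(r:ℝ))^(1-θ) :=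
              mul_pos (Real.rpow_pos_of_pos hd1 θ) (Real.rpow_pos_of_pos hd2 (1-θ))
            have hrw : (Q/(Q-((r:ℝ)-1)))^θ * (Q/(Q-(r:ℝ)))^(1-θ)
                = Q / ((Q-((r:ℝ)-1))^θ * (Q-(r:ℝ))^(1-θ)) := by
              rw [Real.div_rpow hQpos.le hd1.le, Real.div_rpow hQpos.le hd2.le,
                div_mul_div_comm, ← Real.rpow_add hQpos]
              norm_num
            rw [hrw]
            exact div_le_div_of_nonneg_left hQpos.le hgmpos hgm
          -- combine
          have hFq1 : F (q+1) = ((Q/(Q-((r:ℝ)-1)))^θ * (Q/(Q-(r:ℝ)))^(1-θ)) * F q := by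
            rw [hF]
            simp only
            rw [hc1, hc2]
            rw [show Q * ↑(q.choose (r-1)) / (Q - ((r:ℝ)-1)) / ↑r
                = (Q/(Q-((r:ℝ)-1))) * (↑(q.choose (r-1))/↑r) by field_simp <;> ring]
            rw [show Q * ↑(q.choose r) / (Q - (r:ℝ)) = (Q/(Q-(r:ℝ))) * ↑(q.choose r) by
              field_simp <;> ring]
            rw [Real.mul_rpow (by positivity) (by positivity),
              Real.mul_rpow (by positivity) (by positivity)]
            ring
          rw [hBstep, hFq1]
          have hFqpos : 0 ≤ F q := by
            rw [hF]
            positivity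
          calc Q/(Q-2*α) * Bnd α q ≤ Q/(Q-2*α) * F q := by
                apply mul_le_mul_of_nonneg_left hBq (by positivity)
            _ ≤ ((Q/(Q-((r:ℝ)-1)))^θ * (Q/(Q-(r:ℝ)))^(1-θ)) * F q :=
                mul_le_mul_of_nonneg_right hscalar hFqpos
    -- conclude
    have hmain := main n hrn.le
    have hnpos : (0:ℝ) < (n:ℝ) := by linarith
    have hfact : ((2:ℝ))^(r-1) ≤ ((Nat.factorial r : ℕ) : ℝ) := by
      exact_mod_cast two_pow_le_factorial r (by omega)
    have hch1 : (2:ℝ)^(r-1) * ((n.choose (r-1) : ℝ)/(r:ℝ)) ≤ (n:ℝ)^((r-1:ℕ):ℝ) := by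
      have hb : ((n.choose (r-1) : ℝ)) * ((Nat.factorial (r-1) : ℕ) : ℝ) ≤ ((n:ℝ))^(r-1 : ℕ) := by
        exact_mod_cast choose_mul_fac_le n (r-1)
      have hrfac : ((Nat.factorial r : ℕ) : ℝ) = (r:ℝ) * ((Nat.factorial (r-1) : ℕ) : ℝ) := by
        obtain ⟨s, hs⟩ : ∃ s, r = s + 1 := ⟨r - 1, by omega⟩
        rw [hs]
        push_cast [Nat.factorial_succ]
        ring
      rw [Real.rpow_natCast]
      have hrpos : (0:ℝ) < (r:ℝ) := by positivity
      calc (2:ℝ)^(r-1) * ((n.choose (r-1) : ℝ)/(r:ℝ))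
          ≤ ((Nat.factorial r : ℕ) : ℝ) * ((n.choose (r-1) : ℝ)/(r:ℝ)) := by
            apply mul_le_mul_of_nonneg_right hfact (by positivity)
        _ = ((n.choose (r-1) : ℝ)) * ((Nat.factorial (r-1) : ℕ) : ℝ) := by
            rw [hrfac]; field_simp
        _ ≤ (n:ℝ)^(r-1 : ℕ) := hb
    have hch2 : (2:ℝ)^(r-1) * ((n.choose r : ℝ)) ≤ (n:ℝ)^((r:ℕ):ℝ) := by
      have hb : ((n.choose r : ℝ)) * ((Nat.factorial r : ℕ) : ℝ) ≤ ((n:ℝ))^(r : ℕ) := by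
        exact_mod_cast choose_mul_fac_le n r
      rw [Real.rpow_natCast]
      calc (2:ℝ)^(r-1) * ((n.choose r : ℝ)) ≤ ((Nat.factorial r : ℕ) : ℝ) * ((n.choose r : ℝ)) := by
            apply mul_le_mul_of_nonneg_right hfact (by positivity)
        _ = ((n.choose r : ℝ)) * ((Nat.factorial r : ℕ) : ℝ) := by ring
        _ ≤ (n:ℝ)^(r : ℕ) := hb
    have hsplit2 : F n = ((2:ℝ)^(r-1) * ((n.choose (r-1) : ℝ)/(r:ℝ)))^θ
        * ((2:ℝ)^(r-1) * ((n.choose r : ℝ)))^(1-θ) := by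
      rw [hF]
      simp only
      rw [Real.mul_rpow (by positivity) (by positivity),
        Real.mul_rpow (by positivity) (by positivity)]
      rw [show ((2:ℝ)^(r-1))^θ * (((n.choose (r-1) : ℝ))/(r:ℝ))^θ
          * (((2:ℝ)^(r-1))^(1-θ) * ((n.choose r : ℝ))^(1-θ))
          = (((2:ℝ)^(r-1))^θ * ((2:ℝ)^(r-1))^(1-θ))
            * ((((n.choose (r-1) : ℝ))/(r:ℝ))^θ * ((n.choose r : ℝ))^(1-θ)) by ring]
      rw [← Real.rpow_add (by positivity)]
      norm_num
      ring
    calc Bnd α n ≤ F n := hmain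
      _ ≤ ((n:ℝ)^((r-1:ℕ):ℝ))^θ * ((n:ℝ)^((r:ℕ):ℝ))^(1-θ) := by
          rw [hsplit2]
          apply mul_le_mul
          · exact Real.rpow_le_rpow (by positivity) hch1 hθ0.le
          · exact Real.rpow_le_rpow (by positivity) hch2 (by linarith)
          · positivity
          · positivity
      _ = (n:ℝ) ^ (((r-1:ℕ):ℝ)*θ + ((r:ℕ):ℝ)*(1-θ)) := by
          rw [← Real.rpow_mul hnpos.le, ← Real.rpow_mul hnpos.le,
            ← Real.rpow_add hnpos]
      _ = (n:ℝ) ^ (2*α) := by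
          congr 1
          have hcast : ((r-1 : ℕ) : ℝ) = (r:ℝ) - 1 := by
            push_cast [Nat.cast_sub (by omega : 1 ≤ r)]
            ring
          rw [hcast, hθ]
          ring

end KargerAux

open KargerAux

/-- Karger's cut-counting bound: if the minimum cut of a graph `G` on `n`
vertices has value `k > 0`, then for every `α ≥ 1` the number of cuts
(identified with unordered partitions `{S, V \ S}`) of value at most `αk` is at
most `n^{2α}`. -/
theorem stmt12 (V : Type) [Fintype V] [DecidableEq V] (G : SimpleGraph V) [DecidableRel G.Adj]
    (k : ℕ) (hk : 0 < k)
    (hconn : ∀ S : Finset V, S.Nonempty → S ≠ Finset.univ → k ≤ cutValN G S)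
    (hmin : ∃ S : Finset V, S.Nonempty ∧ S ≠ Finset.univ ∧ cutValN G S = k)
    (α : ℝ) (hα : 1 ≤ α) :
    (((Finset.univ.filter (fun S : Finset V =>
          S.Nonempty ∧ S ≠ Finset.univ ∧ (cutValN G S : ℝ) ≤ α * k)).image
        (fun S => ({S, Sᶜ} : Finset (Finset V)))).card : ℝ) ≤
      (Fintype.card V : ℝ) ^ (2 * α) := by
  classical
  set w : V → V → ℕ := fun u v => if G.Adj u v then 1 else 0 with hw
  have hsymm : ∀ a b, w a b = w b a := by
    intro a b
    simp only [hw]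
    by_cases h : G.Adj a b
    · rw [if_pos h, if_pos (G.adj_symm h)]
    · rw [if_neg h, if_neg (fun hc => h (G.adj_symm hc))]
  have hcutW : ∀ S : Finset V, cutValN G S = cutW w S := fun S => rfl
  set 𝒮 := Finset.univ.filter (fun S : Finset V =>
    S.Nonempty ∧ S ≠ Finset.univ ∧ (cutValN G S : ℝ) ≤ α * k) with h𝒮
  by_cases hn2 : 2 ≤ Fintype.card V
  · have hconn' : ∀ S : Finset V, S.Nonempty → S ≠ Finset.univ → k ≤ cutW w S := by
      intro S h1 h2
      rw [← hcutW]
      exact hconn S h1 h2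
    have hkey := key α hα k hk (Fintype.card V) V rfl w hsymm hconn'
    have h𝒮eq : 𝒮 = Finset.univ.filter (fun S : Finset V =>
        S.Nonempty ∧ S ≠ Finset.univ ∧ (cutW w S : ℝ) ≤ α * k) := by
      rw [h𝒮]
      apply Finset.filter_congr
      intro S _
      rw [hcutW]
    rw [← h𝒮eq] at hkey
    -- pairing
    have hmem𝒮 : ∀ S ∈ 𝒮, Sᶜ ∈ 𝒮 ∧ S ≠ Sᶜ ∧
        ({Sᶜ, Sᶜᶜ} : Finset (Finset V)) = ({S, Sᶜ} : Finset (Finset V)) := by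
      intro S hS
      obtain ⟨h1, h2, h3⟩ := (Finset.mem_filter.mp hS).2
      refine ⟨?_, ?_, ?_⟩
      · apply Finset.mem_filter.mpr
        refine ⟨Finset.mem_univ _, ?_, ?_, ?_⟩
        · rw [Finset.nonempty_iff_ne_empty]
          intro hc
          exact h2 (by rwa [Finset.compl_eq_empty_iff] at hc)
        · intro hc
          rw [Finset.compl_eq_univ_iff] at hc
          rw [hc] at h1
          exact Finset.not_nonempty_empty h1
        · rw [hcutW, cutW_compl w hsymm S, ← hcutW]
          exact h3
      · intro hc
        obtain ⟨x, hx⟩ := h1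
        have : x ∈ Sᶜ := hc ▸ hx
        exact (Finset.mem_compl.mp this) hx
      · rw [compl_compl]
        exact Finset.pair_comm _ _
    have hpair : ((𝒮.image (fun S => ({S, Sᶜ} : Finset (Finset V)))).card) * 2 ≤ 𝒮.card := by
      have hfib := Finset.card_eq_sum_card_fiberwise
        (f := fun S : Finset V => ({S, Sᶜ} : Finset (Finset V)))
        (s := 𝒮) (t := 𝒮.image (fun S => ({S, Sᶜ} : Finset (Finset V))))
        (fun x hx => Finset.mem_image_of_mem _ hx)
      have hfib2 : ∀ b ∈ 𝒮.image (fun S => ({S, Sᶜ} : Finset (Finset V))),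
          2 ≤ (𝒮.filter (fun a => ({a, aᶜ} : Finset (Finset V)) = b)).card := by
        intro b hb
        obtain ⟨S, hS, rfl⟩ := Finset.mem_image.mp hb
        obtain ⟨hSc, hne, hpr⟩ := hmem𝒮 S hS
        have hS1 : S ∈ 𝒮.filter (fun a => ({a, aᶜ} : Finset (Finset V)) = {S, Sᶜ}) :=
          Finset.mem_filter.mpr ⟨hS, rfl⟩
        have hS2 : Sᶜ ∈ 𝒮.filter (fun a => ({a, aᶜ} : Finset (Finset V)) = {S, Sᶜ}) :=
          Finset.mem_filter.mpr ⟨hSc, hpr⟩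
        exact Finset.one_lt_card.mpr ⟨S, hS1, Sᶜ, hS2, hne⟩
      calc ((𝒮.image (fun S => ({S, Sᶜ} : Finset (Finset V)))).card) * 2
          = ∑ _b ∈ 𝒮.image (fun S => ({S, Sᶜ} : Finset (Finset V))), 2 := by
            rw [Finset.sum_const, smul_eq_mul]
        _ ≤ ∑ b ∈ 𝒮.image (fun S => ({S, Sᶜ} : Finset (Finset V))),
            (𝒮.filter (fun a => ({a, aᶜ} : Finset (Finset V)) = b)).card :=
            Finset.sum_le_sum hfib2
        _ = 𝒮.card := hfib.symm
    have hBle := Bnd_le_rpow hα hn2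
    have hpairR : ((𝒮.image (fun S => ({S, Sᶜ} : Finset (Finset V)))).card : ℝ) * 2
        ≤ (𝒮.card : ℝ) := by exact_mod_cast hpair
    linarith
  · have h𝒮empty : 𝒮 = ∅ := by
      rw [Finset.eq_empty_iff_forall_notMem]
      intro S hS
      obtain ⟨h1, h2, _⟩ := (Finset.mem_filter.mp hS).2
      have hle : S.card ≤ Fintype.card V := by
        simpa using Finset.card_le_card (Finset.subset_univ S)
      have h1' : 1 ≤ S.card := Finset.card_pos.mpr h1
      have hcard : S.card = Fintype.card V := by omega
      exact h2 (Finset.eq_univ_of_card S (by simpa using hcard))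
    rw [h𝒮empty]
    simp only [Finset.image_empty, Finset.card_empty, Nat.cast_zero]
    positivity
end
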